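/- arXiv:2004.00750 — 10 statements merged into one kernel-verified Lean document; each statement's English description precedes it below -/
import Mathlib

section
/- For any terrain with n points and any indices a < b < c < d in Fin n, if p_a and p_c see each other and p_b and p_d see each other, then p_a and p_d see each other. (Thus the visibility graph of any terrain satisfies the X-property.) -/
/-- `p j` is strictly below the segment `p i p k`. -/
def StrictlyBelow {n : ℕ} (x y : Fin n → ℝ) (i j k : Fin n) : Prop :=
  (x k - x j) * y i - (x k - x i) * y j + (x j - x i) * y k > 0

/-- `p j` is strictly above the segment `p i p k`. -/
def StrictlyAbove {n : ℕ} (x y : Fin n → ℝ) (i j k : Fin n) : Prop :=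
  (x k - x j) * y i - (x k - x i) * y j + (x j - x i) * y k < 0

/-- `p j` lies on or above the segment `p i p k`. -/
def OnOrAbove {n : ℕ} (x y : Fin n → ℝ) (i j k : Fin n) : Prop :=
  (x k - x j) * y i - (x k - x i) * y j + (x j - x i) * y k ≤ 0

/-- For `i < k`, the points `p i` and `p k` see each other. -/
def Sees {n : ℕ} (x y : Fin n → ℝ) (i k : Fin n) : Prop :=
  (k : ℕ) = (i : ℕ) + 1 ∨ ∀ j : Fin n, i < j → j < k → StrictlyBelow x y i j k

/-- The visibility graph of the terrain, as a symmetric relation. -/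
def VisGraph {n : ℕ} (x y : Fin n → ℝ) (i k : Fin n) : Prop :=
  (i < k ∧ Sees x y i k) ∨ (k < i ∧ Sees x y k i)

/-- The edges `{i,k}` (with `i < k`) of the graph `G'` on `{0,…,6}`. -/
def GpEdge (i k : ℕ) : Prop :=
  (i, k) ∈ [(0,1),(1,2),(2,3),(3,4),(4,5),(5,6),
            (0,3),(0,4),(0,5),(0,6),(1,3),(1,6),(2,6),(3,5),(3,6)]

private lemma cross_key3a (xa xb xc xd ya yb yc yd : ℝ)
    (h1 : xa < xb) (h2 : xb < xc) (h3 : xc < xd)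
    (H1 : (xc - xb) * ya - (xc - xa) * yb + (xb - xa) * yc > 0)
    (H2 : (xd - xc) * yb - (xd - xb) * yc + (xc - xb) * yd > 0) :
    (xd - xc) * ya - (xd - xa) * yc + (xc - xa) * yd > 0 := by
  have key : (xc - xb) * ((xd - xc) * ya - (xd - xa) * yc + (xc - xa) * yd)
      = (xd - xc) * ((xc - xb) * ya - (xc - xa) * yb + (xb - xa) * yc)
        + (xc - xa) * ((xd - xc) * yb - (xd - xb) * yc + (xc - xb) * yd) := by ring
  nlinarith [mul_pos (sub_pos.mpr h3) H1, mul_pos (sub_pos.mpr (h1.trans h2)) H2,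
    sub_pos.mpr h2]

private lemma cross_key3b (xa xb xc xd ya yb yc yd : ℝ)
    (h1 : xa < xb) (h2 : xb < xc) (h3 : xc < xd)
    (H1 : (xc - xb) * ya - (xc - xa) * yb + (xb - xa) * yc > 0)
    (H2 : (xd - xc) * yb - (xd - xb) * yc + (xc - xb) * yd > 0) :
    (xd - xb) * ya - (xd - xa) * yb + (xb - xa) * yd > 0 := by
  have key : (xc - xb) * ((xd - xb) * ya - (xd - xa) * yb + (xb - xa) * yd)
      = (xb - xa) * ((xd - xc) * yb - (xd - xb) * yc + (xc - xb) * yd)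
        + (xd - xb) * ((xc - xb) * ya - (xc - xa) * yb + (xb - xa) * yc) := by ring
  nlinarith [mul_pos (sub_pos.mpr h1) H2, mul_pos (sub_pos.mpr (h2.trans h3)) H1,
    sub_pos.mpr h2]

private lemma cross_key1 (xa xj xc xd ya yj yc yd : ℝ)
    (h1 : xa < xj) (h2 : xj < xc) (h3 : xc < xd)
    (H1 : (xc - xj) * ya - (xc - xa) * yj + (xj - xa) * yc > 0)
    (H2 : (xd - xc) * ya - (xd - xa) * yc + (xc - xa) * yd > 0) :
    (xd - xj) * ya - (xd - xa) * yj + (xj - xa) * yd > 0 := by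
  have key : (xc - xa) * ((xd - xj) * ya - (xd - xa) * yj + (xj - xa) * yd)
      = (xd - xa) * ((xc - xj) * ya - (xc - xa) * yj + (xj - xa) * yc)
        + (xj - xa) * ((xd - xc) * ya - (xd - xa) * yc + (xc - xa) * yd) := by ring
  nlinarith [mul_pos (sub_pos.mpr (h1.trans (h2.trans h3))) H1,
    mul_pos (sub_pos.mpr h1) H2, sub_pos.mpr (h1.trans h2)]

private lemma cross_key2 (xa xb xj xd ya yb yj yd : ℝ)
    (h1 : xa < xb) (h2 : xb < xj) (h3 : xj < xd)
    (H1 : (xd - xj) * yb - (xd - xb) * yj + (xj - xb) * yd > 0)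
    (H2 : (xd - xb) * ya - (xd - xa) * yb + (xb - xa) * yd > 0) :
    (xd - xj) * ya - (xd - xa) * yj + (xj - xa) * yd > 0 := by
  have key : (xd - xb) * ((xd - xj) * ya - (xd - xa) * yj + (xj - xa) * yd)
      = (xd - xa) * ((xd - xj) * yb - (xd - xb) * yj + (xj - xb) * yd)
        + (xd - xj) * ((xd - xb) * ya - (xd - xa) * yb + (xb - xa) * yd) := by ring
  nlinarith [mul_pos (sub_pos.mpr (h1.trans (h2.trans h3))) H1,
    mul_pos (sub_pos.mpr h3) H2, sub_pos.mpr (h2.trans h3)]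

theorem terrain_X_property {n : ℕ} (x y : Fin n → ℝ) (hx : StrictMono x)
    (a b c d : Fin n) (hab : a < b) (hbc : b < c) (hcd : c < d)
    (hac : Sees x y a c) (hbd : Sees x y b d) :
    Sees x y a d := by
  -- c ≠ a + 1 is irrelevant unless there is some j strictly between a and c
  have hcne : (c : ℕ) ≠ (a : ℕ) + 1 := by
    have h1 : (a : ℕ) < (b : ℕ) := hab
    have h2 : (b : ℕ) < (c : ℕ) := hbc
    omega
  have hdne : (d : ℕ) ≠ (b : ℕ) + 1 := by
    have h1 : (b : ℕ) < (c : ℕ) := hbc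
    have h2 : (c : ℕ) < (d : ℕ) := hcd
    omega
  have hac' : ∀ j : Fin n, a < j → j < c → StrictlyBelow x y a j c := by
    rcases hac with h | h
    · exact fun j hj1 hj2 => absurd h (by
        have h1 : (a : ℕ) < (j : ℕ) := hj1
        have h2 : (j : ℕ) < (c : ℕ) := hj2
        omega)
    · exact h
  have hbd' : ∀ j : Fin n, b < j → j < d → StrictlyBelow x y b j d :=
    hbd.resolve_left hdne
  have hB : StrictlyBelow x y a b c := hac' b hab hbc
  have hC : StrictlyBelow x y b c d := hbd' c hbc hcd
  have hxab : x a < x b := hx hab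
  have hxbc : x b < x c := hx hbc
  have hxcd : x c < x d := hx hcd
  have hACD : StrictlyBelow x y a c d :=
    cross_key3a (x a) (x b) (x c) (x d) (y a) (y b) (y c) (y d) hxab hxbc hxcd hB hC
  have hABD : StrictlyBelow x y a b d :=
    cross_key3b (x a) (x b) (x c) (x d) (y a) (y b) (y c) (y d) hxab hxbc hxcd hB hC
  right
  intro j hj1 hj2
  rcases lt_or_ge j c with hjc | hcj
  · -- a < j < c : use seeing a c, then lift below segment a d
    have hAJC : StrictlyBelow x y a j c := hac' j hj1 hjc
    exact cross_key1 (x a) (x j) (x c) (x d) (y a) (y j) (y c) (y d)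
      (hx hj1) (hx hjc) hxcd hAJC hACD
  · -- c ≤ j < d, hence b < j < d
    have hbj : b < j := lt_of_lt_of_le hbc hcj
    have hBJD : StrictlyBelow x y b j d := hbd' j hbj hj2
    exact cross_key2 (x a) (x b) (x j) (x d) (y a) (y b) (y j) (y d)
      hxab (hx hbj) (hx hj2) hBJD hABD
end

section
/- For any terrain with n points and any indices i, k in Fin n with i + 2 ≤ k, if p_i and p_k see each other then there exists j with i < j < k such that p_j sees p_i and p_j sees p_k. (Thus the visibility graph of any terrain satisfies the Bar-property.) -/
theorem terrain_Bar_property {n : ℕ} (x y : Fin n → ℝ) (hx : StrictMono x)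
    (i k : Fin n) (hik : (i : ℕ) + 2 ≤ (k : ℕ)) (hsee : Sees x y i k) :
    ∃ j : Fin n, i < j ∧ j < k ∧ Sees x y i j ∧ Sees x y j k := by

  have hik2 : i < k := Fin.lt_def.mpr (by omega)
  have hsee' : ∀ m : Fin n, i < m → m < k → StrictlyBelow x y i m k := by
    rcases hsee with h | h
    · omega
    · exact h
  have hn : (i : ℕ) + 1 < n := lt_trans (by omega) k.isLt
  set S : Finset (Fin n) := Finset.univ.filter (fun j => i < j ∧ j < k) with hS
  have hSne : S.Nonempty := by
    refine ⟨⟨(i : ℕ) + 1, hn⟩, ?_⟩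
    simp only [hS, Finset.mem_filter, Finset.mem_univ, true_and, Fin.lt_def]
    omega
  obtain ⟨j, hjS, hmin⟩ := S.exists_min_image
    (fun j => (x k - x j) * y i - (x k - x i) * y j + (x j - x i) * y k) hSne
  simp only [hS, Finset.mem_filter, Finset.mem_univ, true_and] at hjS
  obtain ⟨hij, hjk⟩ := hjS
  have h2 := hsee' j hij hjk
  have hxik : x i < x k := hx hik2
  refine ⟨j, hij, hjk, Or.inr ?_, Or.inr ?_⟩
  · intro m him hmj
    have hmS : m ∈ S := by
      simp only [hS, Finset.mem_filter, Finset.mem_univ, true_and]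
      exact ⟨him, lt_trans hmj hjk⟩
    have h1 := hmin m hmS
    have h3 := hsee' m him (lt_trans hmj hjk)
    have hxm : x m < x j := hx hmj
    have hxim : x i < x m := hx him
    simp only [StrictlyBelow] at *
    have key : ((x j - x m) * y i - (x j - x i) * y m + (x m - x i) * y j) * (x k - x i)
        = ((x k - x m) * y i - (x k - x i) * y m + (x m - x i) * y k) * (x j - x i)
          - ((x k - x j) * y i - (x k - x i) * y j + (x j - x i) * y k) * (x m - x i) := by
      ring
    nlinarith [mul_pos h2 (sub_pos.mpr hxm),
      mul_nonneg (sub_nonneg.mpr h1) (le_of_lt (sub_pos.mpr (lt_trans hxim hxm)))]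
  · intro m hjm hmk
    have hmS : m ∈ S := by
      simp only [hS, Finset.mem_filter, Finset.mem_univ, true_and]
      exact ⟨lt_trans hij hjm, hmk⟩
    have h1 := hmin m hmS
    have h3 := hsee' m (lt_trans hij hjm) hmk
    have hxm : x j < x m := hx hjm
    have hxmk : x m < x k := hx hmk
    simp only [StrictlyBelow] at *
    have key : ((x k - x m) * y j - (x k - x j) * y m + (x m - x j) * y k) * (x k - x i)
        = ((x k - x m) * y i - (x k - x i) * y m + (x m - x i) * y k) * (x k - x j)
          - ((x k - x j) * y i - (x k - x i) * y j + (x j - x i) * y k) * (x k - x m) := by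
      ring
    nlinarith [mul_pos h2 (sub_pos.mpr hxm),
      mul_nonneg (sub_nonneg.mpr h1) (le_of_lt (sub_pos.mpr (lt_trans hxm hxmk)))]
end

section
/- Let a terrain with n points be given and let i, k be indices with i + 2 ≤ k such that p_i and p_k do NOT see each other. Let j be the largest index with i < j < k such that p_i sees p_j (it exists since j = i+1 qualifies), and let j' be the smallest index with i < j' < k such that p_{j'} sees p_k (it exists since j' = k−1 qualifies). Then p_j lies on or above the segment p_i p_k, and p_{j'} lies on or above the segment p_i p_k. -/
theorem designated_blockers_on_or_above {n : ℕ} (x y : Fin n → ℝ) (hx : StrictMono x)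
    (i k : Fin n) (hik : (i : ℕ) + 2 ≤ (k : ℕ)) (hnsee : ¬ Sees x y i k)
    (j : Fin n) (hij : i < j) (hjk : j < k) (hsees_ij : Sees x y i j)
    (hjmax : ∀ j₂ : Fin n, i < j₂ → j₂ < k → Sees x y i j₂ → j₂ ≤ j)
    (j' : Fin n) (hij' : i < j') (hj'k : j' < k) (hsees_j'k : Sees x y j' k)
    (hj'min : ∀ j₂ : Fin n, i < j₂ → j₂ < k → Sees x y j₂ k → j' ≤ j₂) :
    OnOrAbove x y i j k ∧ OnOrAbove x y i j' k := by
  classical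
  set S : Finset (Fin n) := Finset.univ.filter (fun t => i < t ∧ t < k) with hSdef
  have hmemS : ∀ t : Fin n, t ∈ S ↔ i < t ∧ t < k := by
    intro t; simp [hSdef]
  -- a witness on or above the segment i k
  obtain ⟨t₁, ht₁i, ht₁k, ht₁E⟩ :
      ∃ t : Fin n, i < t ∧ t < k ∧ ¬ StrictlyBelow x y i t k := by
    by_contra h
    push_neg at h
    exact hnsee (Or.inr fun t h1 h2 => h t h1 h2)
  have ht₁S : t₁ ∈ S := (hmemS t₁).2 ⟨ht₁i, ht₁k⟩
  have hSne : S.Nonempty := ⟨t₁, ht₁S⟩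
  have hE₁ : (x k - x t₁) * y i - (x k - x i) * y t₁ + (x t₁ - x i) * y k ≤ 0 :=
    not_lt.1 ht₁E
  -- positivity helpers
  have hd : ∀ a b : Fin n, a < b → (0:ℝ) < x b - x a := fun a b hab => sub_pos.2 (hx hab)
  constructor
  · -- first part : j is the leftmost maximizer of slope from i
    set f : Fin n → ℝ := fun t => (y t - y i) / (x t - x i) with hfdef
    obtain ⟨m₀, hm₀S, hmax₀⟩ := S.exists_max_image f hSne
    set S' : Finset (Fin n) := S.filter (fun t => ∀ s ∈ S, f s ≤ f t) with hS'def
    have hS'ne : S'.Nonempty := ⟨m₀, Finset.mem_filter.2 ⟨hm₀S, hmax₀⟩⟩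
    set m : Fin n := S'.min' hS'ne with hmdef
    have hmS' : m ∈ S' := S'.min'_mem hS'ne
    have hmS : m ∈ S := (Finset.mem_filter.1 hmS').1
    have hmmax : ∀ s ∈ S, f s ≤ f m := (Finset.mem_filter.1 hmS').2
    have him : i < m := ((hmemS m).1 hmS).1
    have hmk : m < k := ((hmemS m).1 hmS).2
    have hstrict : ∀ t ∈ S, t < m → f t < f m := by
      intro t htS htm
      by_contra h
      push_neg at h
      have hall : ∀ s ∈ S, f s ≤ f t := fun s hs => (hmmax s hs).trans h
      have : t ∈ S' := Finset.mem_filter.2 ⟨htS, hall⟩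
      exact absurd (S'.min'_le t this) (not_le.2 htm)
    have hseesim : Sees x y i m := by
      refine Or.inr fun t ht1 ht2 => ?_
      have htS : t ∈ S := (hmemS t).2 ⟨ht1, ht2.trans hmk⟩
      have hft : f t < f m := hstrict t htS ht2
      have hd1 : (0:ℝ) < x t - x i := hd i t ht1
      have hd2 : (0:ℝ) < x m - x i := hd i m him
      rw [hfdef] at hft
      simp only at hft
      rw [div_lt_div_iff₀ hd1 hd2] at hft
      show (x m - x t) * y i - (x m - x i) * y t + (x t - x i) * y m > 0
      nlinarith [hft]
    have hmj : m ≤ j := hjmax m him hmk hseesim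
    have hjm : j = m := by
      refine le_antisymm ?_ hmj
      by_contra h
      push_neg at h  -- m < j
      rcases hsees_ij with h1 | h1
      · have h2 := Fin.lt_def.1 him
        have h3 := Fin.lt_def.1 h
        omega
      · have hsb := h1 m him h
        have hjS : j ∈ S := (hmemS j).2 ⟨hij, hjk⟩
        have hle := hmmax j hjS
        rw [hfdef] at hle
        simp only at hle
        have hd1 : (0:ℝ) < x m - x i := hd i m him
        have hd2 : (0:ℝ) < x j - x i := hd i j hij
        rw [div_le_div_iff₀ hd2 hd1] at hle
        have hsb' : (x j - x m) * y i - (x j - x i) * y m + (x m - x i) * y j > 0 := hsb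
        nlinarith [hsb', hle]
    -- conclude
    rw [hjm]
    show (x k - x m) * y i - (x k - x i) * y m + (x m - x i) * y k ≤ 0
    have hft₁ : f t₁ ≤ f m := hmmax t₁ ht₁S
    rw [hfdef] at hft₁
    simp only at hft₁
    have hd1 : (0:ℝ) < x t₁ - x i := hd i t₁ ht₁i
    have hd2 : (0:ℝ) < x m - x i := hd i m him
    have hdk : (0:ℝ) < x k - x i := hd i k (ht₁i.trans ht₁k)
    rw [div_le_div_iff₀ hd1 hd2] at hft₁
    nlinarith [mul_le_mul_of_nonneg_left hft₁ hdk.le,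
      mul_le_mul_of_nonneg_left hE₁ hd2.le, hd1, hd2, hdk]
  · -- second part : j' is the rightmost minimizer of slope to k
    set v : Fin n → ℝ := fun t => (y k - y t) / (x k - x t) with hvdef
    obtain ⟨m₀, hm₀S, hmin₀⟩ := S.exists_min_image v hSne
    set S' : Finset (Fin n) := S.filter (fun t => ∀ s ∈ S, v t ≤ v s) with hS'def
    have hS'ne : S'.Nonempty := ⟨m₀, Finset.mem_filter.2 ⟨hm₀S, hmin₀⟩⟩
    set m : Fin n := S'.max' hS'ne with hmdef
    have hmS' : m ∈ S' := S'.max'_mem hS'ne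
    have hmS : m ∈ S := (Finset.mem_filter.1 hmS').1
    have hmmin : ∀ s ∈ S, v m ≤ v s := (Finset.mem_filter.1 hmS').2
    have him : i < m := ((hmemS m).1 hmS).1
    have hmk : m < k := ((hmemS m).1 hmS).2
    have hstrict : ∀ t ∈ S, m < t → v m < v t := by
      intro t htS htm
      by_contra h
      push_neg at h
      have hall : ∀ s ∈ S, v t ≤ v s := fun s hs => h.trans (hmmin s hs)
      have : t ∈ S' := Finset.mem_filter.2 ⟨htS, hall⟩
      exact absurd (S'.le_max' t this) (not_le.2 htm)
    have hseesmk : Sees x y m k := by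
      refine Or.inr fun t ht1 ht2 => ?_
      have htS : t ∈ S := (hmemS t).2 ⟨him.trans ht1, ht2⟩
      have hvt : v m < v t := hstrict t htS ht1
      have hd1 : (0:ℝ) < x k - x m := hd m k hmk
      have hd2 : (0:ℝ) < x k - x t := hd t k ht2
      rw [hvdef] at hvt
      simp only at hvt
      rw [div_lt_div_iff₀ hd1 hd2] at hvt
      show (x k - x t) * y m - (x k - x m) * y t + (x t - x m) * y k > 0
      nlinarith [hvt]
    have hmj : j' ≤ m := hj'min m him hmk hseesmk
    have hjm : j' = m := by
      refine le_antisymm hmj ?_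
      by_contra h
      push_neg at h  -- j' < m
      rcases hsees_j'k with h1 | h1
      · have h2 := Fin.lt_def.1 hmk
        have h3 := Fin.lt_def.1 h
        omega
      · have hsb := h1 m h hmk
        have hjS : j' ∈ S := (hmemS j').2 ⟨hij', hj'k⟩
        have hle := hmmin j' hjS
        rw [hvdef] at hle
        simp only at hle
        have hd1 : (0:ℝ) < x k - x m := hd m k hmk
        have hd2 : (0:ℝ) < x k - x j' := hd j' k hj'k
        rw [div_le_div_iff₀ hd1 hd2] at hle
        have hsb' : (x k - x m) * y j' - (x k - x j') * y m + (x m - x j') * y k > 0 := hsb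
        nlinarith [hsb', hle]
    rw [hjm]
    show (x k - x m) * y i - (x k - x i) * y m + (x m - x i) * y k ≤ 0
    have hvt₁ : v m ≤ v t₁ := hmmin t₁ ht₁S
    rw [hvdef] at hvt₁
    simp only at hvt₁
    have hd1 : (0:ℝ) < x k - x t₁ := hd t₁ k ht₁k
    have hd2 : (0:ℝ) < x k - x m := hd m k hmk
    have hdk : (0:ℝ) < x k - x i := hd i k (ht₁i.trans ht₁k)
    rw [div_le_div_iff₀ hd2 hd1] at hvt₁
    nlinarith [mul_le_mul_of_nonneg_left hvt₁ hdk.le,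
      mul_le_mul_of_nonneg_left hE₁ hd2.le, hd1, hd2, hdk]
end

section
/- Let a terrain with n points be given and let i, k be indices with i + 2 ≤ k such that p_i and p_k do NOT see each other. Let j be the largest index with i < j < k such that p_i sees p_j, and let j' be the smallest index with i < j' < k such that p_{j'} sees p_k. Then j ≤ j'. -/
private def Dt (xa ya xm ym xd yd : ℝ) : ℝ := (xd - xm) * ya - (xd - xa) * ym + (xm - xa) * yd

private lemma i1 (xa ya xm ym xc yc xd yd : ℝ) :
    Dt xa ya xm ym xd yd * (xc - xa)
      = Dt xa ya xm ym xc yc * (xd - xa) + Dt xa ya xc yc xd yd * (xm - xa) := by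
  simp only [Dt]; ring

private lemma i2 (xa ya xb yb xm ym xd yd : ℝ) :
    Dt xa ya xm ym xd yd * (xd - xb)
      = Dt xb yb xm ym xd yd * (xd - xa) + Dt xa ya xb yb xd yd * (xd - xm) := by
  simp only [Dt]; ring

private lemma convexP (xa ya xb yb xc yc xd yd : ℝ)
    (hab : xa < xb) (hbc : xb < xc) (hcd : xc < xd)
    (h1 : 0 < Dt xa ya xb yb xc yc) (h2 : 0 < Dt xb yb xc yc xd yd) :
    0 < Dt xa ya xb yb xd yd := by
  have e1 := i1 xa ya xb yb xc yc xd yd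
  have e2 := i2 xa ya xb yb xc yc xd yd
  nlinarith [mul_pos h1 (by linarith : (0:ℝ) < xd - xa),
    mul_pos h2 (by linarith : (0:ℝ) < xb - xa),
    mul_pos (mul_pos h1 (by linarith : (0:ℝ) < xd - xa)) (by linarith : (0:ℝ) < xd - xb),
    mul_pos (mul_pos h2 (by linarith : (0:ℝ) < xd - xa)) (by linarith : (0:ℝ) < xb - xa),
    mul_pos (by linarith : (0:ℝ) < xd - xa) (by linarith : (0:ℝ) < xc - xb)]

private lemma convexQ (xa ya xb yb xc yc xd yd : ℝ)
    (hab : xa < xb) (hbc : xb < xc) (hcd : xc < xd)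
    (h1 : 0 < Dt xa ya xb yb xc yc) (h2 : 0 < Dt xb yb xc yc xd yd) :
    0 < Dt xa ya xc yc xd yd := by
  have hP := convexP xa ya xb yb xc yc xd yd hab hbc hcd h1 h2
  have e2 := i2 xa ya xb yb xc yc xd yd
  nlinarith [mul_pos h2 (by linarith : (0:ℝ) < xd - xa),
    mul_pos hP (by linarith : (0:ℝ) < xd - xc)]

private lemma push1 (xa ya xm ym xc yc xd yd : ℝ)
    (ham : xa < xm) (hmc : xm < xc) (hcd : xc < xd)
    (h1 : 0 < Dt xa ya xm ym xc yc) (h2 : 0 < Dt xa ya xc yc xd yd) :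
    0 < Dt xa ya xm ym xd yd := by
  have e1 := i1 xa ya xm ym xc yc xd yd
  nlinarith [mul_pos h1 (by linarith : (0:ℝ) < xd - xa),
    mul_pos h2 (by linarith : (0:ℝ) < xm - xa)]

private lemma push2 (xa ya xb yb xm ym xd yd : ℝ)
    (hab : xa < xb) (hbm : xb < xm) (hmd : xm < xd)
    (h1 : 0 < Dt xb yb xm ym xd yd) (h2 : 0 < Dt xa ya xb yb xd yd) :
    0 < Dt xa ya xm ym xd yd := by
  have e2 := i2 xa ya xb yb xm ym xd yd
  nlinarith [mul_pos h1 (by linarith : (0:ℝ) < xd - xa),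
    mul_pos h2 (by linarith : (0:ℝ) < xd - xm)]

private lemma sb_iff {n : ℕ} (x y : Fin n → ℝ) (a m d : Fin n) :
    StrictlyBelow x y a m d ↔ 0 < Dt (x a) (y a) (x m) (y m) (x d) (y d) := Iff.rfl

theorem designated_blockers_ordered {n : ℕ} (x y : Fin n → ℝ) (hx : StrictMono x)
    (i k : Fin n) (hik : (i : ℕ) + 2 ≤ (k : ℕ)) (hnsee : ¬ Sees x y i k)
    (j : Fin n) (hij : i < j) (hjk : j < k) (hsees_ij : Sees x y i j)
    (hjmax : ∀ j₂ : Fin n, i < j₂ → j₂ < k → Sees x y i j₂ → j₂ ≤ j)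
    (j' : Fin n) (hij' : i < j') (hj'k : j' < k) (hsees_j'k : Sees x y j' k)
    (hj'min : ∀ j₂ : Fin n, i < j₂ → j₂ < k → Sees x y j₂ k → j' ≤ j₂) :
    j ≤ j' := by
  by_contra hjj'
  push_neg at hjj'
  -- points: a = i, b = j', c = j, d = k with a < b < c < d
  have hib : i < j' := hij'
  have hbc : j' < j := hjj'
  have hcd : j < k := hjk
  -- extract the universal branches of the seeing hypotheses
  have hAC : ∀ m : Fin n, i < m → m < j → StrictlyBelow x y i m j := by
    rcases hsees_ij with h | h
    · exfalso
      have h1 : (i : ℕ) < (j' : ℕ) := hib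
      have h2 : (j' : ℕ) < (j : ℕ) := hbc
      omega
    · exact h
  have hBD : ∀ m : Fin n, j' < m → m < k → StrictlyBelow x y j' m k := by
    rcases hsees_j'k with h | h
    · exfalso
      have h1 : (j' : ℕ) < (j : ℕ) := hbc
      have h2 : (j : ℕ) < (k : ℕ) := hcd
      omega
    · exact h
  have xab : x i < x j' := hx hib
  have xbc : x j' < x j := hx hbc
  have xcd : x j < x k := hx hcd
  have h1 : 0 < Dt (x i) (y i) (x j') (y j') (x j) (y j) :=
    (sb_iff x y i j' j).mp (hAC j' hib hbc)
  have h2 : 0 < Dt (x j') (y j') (x j) (y j) (x k) (y k) :=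
    (sb_iff x y j' j k).mp (hBD j hbc hcd)
  have hP := convexP (x i) (y i) (x j') (y j') (x j) (y j) (x k) (y k) xab xbc xcd h1 h2
  have hQ := convexQ (x i) (y i) (x j') (y j') (x j) (y j) (x k) (y k) xab xbc xcd h1 h2
  apply hnsee
  right
  intro m him hmk
  rw [sb_iff]
  rcases lt_trichotomy m j with hmj | hmj | hmj
  · exact push1 (x i) (y i) (x m) (y m) (x j) (y j) (x k) (y k)
      (hx him) (hx hmj) xcd ((sb_iff x y i m j).mp (hAC m him hmj)) hQ
  · subst hmj; exact hQ
  · have hbm : j' < m := lt_trans hbc hmj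
    exact push2 (x i) (y i) (x j') (y j') (x m) (y m) (x k) (y k)
      xab (hx hbm) (hx hmk) ((sb_iff x y j' m k).mp (hBD m hbm hmk)) hP
end

section
/- Let x_0 < x_1 < … < x_6 and y_0, …, y_6 be real numbers satisfying all six G'-constraints. Then the visibility graph of the terrain with points p_i = (x_i, y_i) is exactly G': for all 0 ≤ i < k ≤ 6, p_i and p_k see each other if and only if {i, k} is an edge of G'. -/
set_option maxHeartbeats 4000000 in
theorem lp_feasible_gives_Gp (x y : Fin 7 → ℝ) (hx : StrictMono x)
    (h1 : StrictlyAbove x y 0 1 2)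
    (h2 : StrictlyBelow x y 0 3 4)
    (h3 : StrictlyAbove x y 1 3 5)
    (h4 : StrictlyBelow x y 2 3 6)
    (h5 : StrictlyBelow x y 3 5 6)
    (h6 : StrictlyAbove x y 4 5 6) :
    ∀ i k : Fin 7, i < k → (Sees x y i k ↔ GpEdge (i : ℕ) (k : ℕ)) := by
  have hx01 : x 0 < x 1 := hx (show (0:Fin 7) < 1 by decide)
  have hx02 : x 0 < x 2 := hx (show (0:Fin 7) < 2 by decide)
  have hx03 : x 0 < x 3 := hx (show (0:Fin 7) < 3 by decide)
  have hx04 : x 0 < x 4 := hx (show (0:Fin 7) < 4 by decide)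
  have hx05 : x 0 < x 5 := hx (show (0:Fin 7) < 5 by decide)
  have hx06 : x 0 < x 6 := hx (show (0:Fin 7) < 6 by decide)
  have hx12 : x 1 < x 2 := hx (show (1:Fin 7) < 2 by decide)
  have hx13 : x 1 < x 3 := hx (show (1:Fin 7) < 3 by decide)
  have hx14 : x 1 < x 4 := hx (show (1:Fin 7) < 4 by decide)
  have hx15 : x 1 < x 5 := hx (show (1:Fin 7) < 5 by decide)
  have hx16 : x 1 < x 6 := hx (show (1:Fin 7) < 6 by decide)
  have hx23 : x 2 < x 3 := hx (show (2:Fin 7) < 3 by decide)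
  have hx24 : x 2 < x 4 := hx (show (2:Fin 7) < 4 by decide)
  have hx25 : x 2 < x 5 := hx (show (2:Fin 7) < 5 by decide)
  have hx26 : x 2 < x 6 := hx (show (2:Fin 7) < 6 by decide)
  have hx34 : x 3 < x 4 := hx (show (3:Fin 7) < 4 by decide)
  have hx35 : x 3 < x 5 := hx (show (3:Fin 7) < 5 by decide)
  have hx36 : x 3 < x 6 := hx (show (3:Fin 7) < 6 by decide)
  have hx45 : x 4 < x 5 := hx (show (4:Fin 7) < 5 by decide)
  have hx46 : x 4 < x 6 := hx (show (4:Fin 7) < 6 by decide)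
  have hx56 : x 5 < x 6 := hx (show (5:Fin 7) < 6 by decide)
  have h012 : (x 2 - x 1) * y 0 - (x 2 - x 0) * y 1 + (x 1 - x 0) * y 2 < 0 := h1
  have h034 : 0 < (x 4 - x 3) * y 0 - (x 4 - x 0) * y 3 + (x 3 - x 0) * y 4 := h2
  have h135 : (x 5 - x 3) * y 1 - (x 5 - x 1) * y 3 + (x 3 - x 1) * y 5 < 0 := h3
  have h236 : 0 < (x 6 - x 3) * y 2 - (x 6 - x 2) * y 3 + (x 3 - x 2) * y 6 := h4
  have h356 : 0 < (x 6 - x 5) * y 3 - (x 6 - x 3) * y 5 + (x 5 - x 3) * y 6 := h5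
  have h456 : (x 6 - x 5) * y 4 - (x 6 - x 4) * y 5 + (x 5 - x 4) * y 6 < 0 := h6
  have h256 : 0 < (x 6 - x 5) * y 2 - (x 6 - x 2) * y 5 + (x 5 - x 2) * y 6 := by
    have hp : 0 < (x 6 - x 3) * ((x 6 - x 5) * y 2 - (x 6 - x 2) * y 5 + (x 5 - x 2) * y 6) := by linarith [mul_pos (sub_pos.mpr hx26) h356, mul_pos (sub_pos.mpr hx56) h236]
    have := (mul_pos_iff_of_pos_left (sub_pos.mpr hx36)).mp hp
    linarith
  have h246 : 0 < (x 6 - x 4) * y 2 - (x 6 - x 2) * y 4 + (x 4 - x 2) * y 6 := by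
    have hp : 0 < (x 6 - x 5) * ((x 6 - x 4) * y 2 - (x 6 - x 2) * y 4 + (x 4 - x 2) * y 6) := by linarith [mul_pos (sub_pos.mpr hx46) h256, mul_pos (sub_pos.mpr hx26) (neg_pos.mpr h456)]
    have := (mul_pos_iff_of_pos_left (sub_pos.mpr hx56)).mp hp
    linarith
  have h245 : 0 < (x 5 - x 4) * y 2 - (x 5 - x 2) * y 4 + (x 4 - x 2) * y 5 := by
    have hp : 0 < (x 6 - x 4) * ((x 5 - x 4) * y 2 - (x 5 - x 2) * y 4 + (x 4 - x 2) * y 5) := by linarith [mul_pos (sub_pos.mpr hx45) h246, mul_pos (sub_pos.mpr hx24) (neg_pos.mpr h456)]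
    have := (mul_pos_iff_of_pos_left (sub_pos.mpr hx46)).mp hp
    linarith
  have h346 : 0 < (x 6 - x 4) * y 3 - (x 6 - x 3) * y 4 + (x 4 - x 3) * y 6 := by
    have hp : 0 < (x 6 - x 5) * ((x 6 - x 4) * y 3 - (x 6 - x 3) * y 4 + (x 4 - x 3) * y 6) := by linarith [mul_pos (sub_pos.mpr hx46) h356, mul_pos (sub_pos.mpr hx36) (neg_pos.mpr h456)]
    have := (mul_pos_iff_of_pos_left (sub_pos.mpr hx56)).mp hp
    linarith
  have h345 : 0 < (x 5 - x 4) * y 3 - (x 5 - x 3) * y 4 + (x 4 - x 3) * y 5 := by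
    have hp : 0 < (x 6 - x 4) * ((x 5 - x 4) * y 3 - (x 5 - x 3) * y 4 + (x 4 - x 3) * y 5) := by linarith [mul_pos (sub_pos.mpr hx45) h346, mul_pos (sub_pos.mpr hx34) (neg_pos.mpr h456)]
    have := (mul_pos_iff_of_pos_left (sub_pos.mpr hx46)).mp hp
    linarith
  have h035 : 0 < (x 5 - x 3) * y 0 - (x 5 - x 0) * y 3 + (x 3 - x 0) * y 5 := by
    have hp : 0 < (x 4 - x 3) * ((x 5 - x 3) * y 0 - (x 5 - x 0) * y 3 + (x 3 - x 0) * y 5) := by linarith [mul_pos (sub_pos.mpr hx35) h034, mul_pos (sub_pos.mpr hx03) h345]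
    have := (mul_pos_iff_of_pos_left (sub_pos.mpr hx34)).mp hp
    linarith
  have h045 : 0 < (x 5 - x 4) * y 0 - (x 5 - x 0) * y 4 + (x 4 - x 0) * y 5 := by
    have hp : 0 < (x 4 - x 3) * ((x 5 - x 4) * y 0 - (x 5 - x 0) * y 4 + (x 4 - x 0) * y 5) := by linarith [mul_pos (sub_pos.mpr hx04) h345, mul_pos (sub_pos.mpr hx45) h034]
    have := (mul_pos_iff_of_pos_left (sub_pos.mpr hx34)).mp hp
    linarith
  have h036 : 0 < (x 6 - x 3) * y 0 - (x 6 - x 0) * y 3 + (x 3 - x 0) * y 6 := by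
    have hp : 0 < (x 4 - x 3) * ((x 6 - x 3) * y 0 - (x 6 - x 0) * y 3 + (x 3 - x 0) * y 6) := by linarith [mul_pos (sub_pos.mpr hx36) h034, mul_pos (sub_pos.mpr hx03) h346]
    have := (mul_pos_iff_of_pos_left (sub_pos.mpr hx34)).mp hp
    linarith
  have h046 : 0 < (x 6 - x 4) * y 0 - (x 6 - x 0) * y 4 + (x 4 - x 0) * y 6 := by
    have hp : 0 < (x 4 - x 3) * ((x 6 - x 4) * y 0 - (x 6 - x 0) * y 4 + (x 4 - x 0) * y 6) := by linarith [mul_pos (sub_pos.mpr hx04) h346, mul_pos (sub_pos.mpr hx46) h034]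
    have := (mul_pos_iff_of_pos_left (sub_pos.mpr hx34)).mp hp
    linarith
  have h056 : 0 < (x 6 - x 5) * y 0 - (x 6 - x 0) * y 5 + (x 5 - x 0) * y 6 := by
    have hp : 0 < (x 6 - x 3) * ((x 6 - x 5) * y 0 - (x 6 - x 0) * y 5 + (x 5 - x 0) * y 6) := by linarith [mul_pos (sub_pos.mpr hx06) h356, mul_pos (sub_pos.mpr hx56) h036]
    have := (mul_pos_iff_of_pos_left (sub_pos.mpr hx36)).mp hp
    linarith
  have h134 : (x 4 - x 3) * y 1 - (x 4 - x 1) * y 3 + (x 3 - x 1) * y 4 < 0 := by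
    have hp : 0 < (x 5 - x 3) * (-((x 4 - x 3) * y 1 - (x 4 - x 1) * y 3 + (x 3 - x 1) * y 4)) := by linarith [mul_pos (sub_pos.mpr hx34) (neg_pos.mpr h135), mul_pos (sub_pos.mpr hx13) h345]
    have := (mul_pos_iff_of_pos_left (sub_pos.mpr hx35)).mp hp
    linarith
  have h014 : 0 < (x 4 - x 1) * y 0 - (x 4 - x 0) * y 1 + (x 1 - x 0) * y 4 := by
    have hp : 0 < (x 4 - x 3) * ((x 4 - x 1) * y 0 - (x 4 - x 0) * y 1 + (x 1 - x 0) * y 4) := by linarith [mul_pos (sub_pos.mpr hx14) h034, mul_pos (sub_pos.mpr hx04) (neg_pos.mpr h134)]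
    have := (mul_pos_iff_of_pos_left (sub_pos.mpr hx34)).mp hp
    linarith
  have h013 : 0 < (x 3 - x 1) * y 0 - (x 3 - x 0) * y 1 + (x 1 - x 0) * y 3 := by
    have hp : 0 < (x 4 - x 1) * ((x 3 - x 1) * y 0 - (x 3 - x 0) * y 1 + (x 1 - x 0) * y 3) := by linarith [mul_pos (sub_pos.mpr hx13) h014, mul_pos (sub_pos.mpr hx01) (neg_pos.mpr h134)]
    have := (mul_pos_iff_of_pos_left (sub_pos.mpr hx14)).mp hp
    linarith
  have h015 : 0 < (x 5 - x 1) * y 0 - (x 5 - x 0) * y 1 + (x 1 - x 0) * y 5 := by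
    have hp : 0 < (x 3 - x 0) * ((x 5 - x 1) * y 0 - (x 5 - x 0) * y 1 + (x 1 - x 0) * y 5) := by linarith [mul_pos (sub_pos.mpr hx05) h013, mul_pos (sub_pos.mpr hx01) h035]
    have := (mul_pos_iff_of_pos_left (sub_pos.mpr hx03)).mp hp
    linarith
  have h016 : 0 < (x 6 - x 1) * y 0 - (x 6 - x 0) * y 1 + (x 1 - x 0) * y 6 := by
    have hp : 0 < (x 3 - x 0) * ((x 6 - x 1) * y 0 - (x 6 - x 0) * y 1 + (x 1 - x 0) * y 6) := by linarith [mul_pos (sub_pos.mpr hx06) h013, mul_pos (sub_pos.mpr hx01) h036]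
    have := (mul_pos_iff_of_pos_left (sub_pos.mpr hx03)).mp hp
    linarith
  have h023 : 0 < (x 3 - x 2) * y 0 - (x 3 - x 0) * y 2 + (x 2 - x 0) * y 3 := by
    have hp : 0 < (x 1 - x 0) * ((x 3 - x 2) * y 0 - (x 3 - x 0) * y 2 + (x 2 - x 0) * y 3) := by linarith [mul_pos (sub_pos.mpr hx02) h013, mul_pos (sub_pos.mpr hx03) (neg_pos.mpr h012)]
    have := (mul_pos_iff_of_pos_left (sub_pos.mpr hx01)).mp hp
    linarith
  have h123 : 0 < (x 3 - x 2) * y 1 - (x 3 - x 1) * y 2 + (x 2 - x 1) * y 3 := by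
    have hp : 0 < (x 1 - x 0) * ((x 3 - x 2) * y 1 - (x 3 - x 1) * y 2 + (x 2 - x 1) * y 3) := by linarith [mul_pos (sub_pos.mpr hx12) h013, mul_pos (sub_pos.mpr hx13) (neg_pos.mpr h012)]
    have := (mul_pos_iff_of_pos_left (sub_pos.mpr hx01)).mp hp
    linarith
  have h024 : 0 < (x 4 - x 2) * y 0 - (x 4 - x 0) * y 2 + (x 2 - x 0) * y 4 := by
    have hp : 0 < (x 1 - x 0) * ((x 4 - x 2) * y 0 - (x 4 - x 0) * y 2 + (x 2 - x 0) * y 4) := by linarith [mul_pos (sub_pos.mpr hx02) h014, mul_pos (sub_pos.mpr hx04) (neg_pos.mpr h012)]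
    have := (mul_pos_iff_of_pos_left (sub_pos.mpr hx01)).mp hp
    linarith
  have h124 : 0 < (x 4 - x 2) * y 1 - (x 4 - x 1) * y 2 + (x 2 - x 1) * y 4 := by
    have hp : 0 < (x 1 - x 0) * ((x 4 - x 2) * y 1 - (x 4 - x 1) * y 2 + (x 2 - x 1) * y 4) := by linarith [mul_pos (sub_pos.mpr hx12) h014, mul_pos (sub_pos.mpr hx14) (neg_pos.mpr h012)]
    have := (mul_pos_iff_of_pos_left (sub_pos.mpr hx01)).mp hp
    linarith
  have h025 : 0 < (x 5 - x 2) * y 0 - (x 5 - x 0) * y 2 + (x 2 - x 0) * y 5 := by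
    have hp : 0 < (x 1 - x 0) * ((x 5 - x 2) * y 0 - (x 5 - x 0) * y 2 + (x 2 - x 0) * y 5) := by linarith [mul_pos (sub_pos.mpr hx02) h015, mul_pos (sub_pos.mpr hx05) (neg_pos.mpr h012)]
    have := (mul_pos_iff_of_pos_left (sub_pos.mpr hx01)).mp hp
    linarith
  have h125 : 0 < (x 5 - x 2) * y 1 - (x 5 - x 1) * y 2 + (x 2 - x 1) * y 5 := by
    have hp : 0 < (x 1 - x 0) * ((x 5 - x 2) * y 1 - (x 5 - x 1) * y 2 + (x 2 - x 1) * y 5) := by linarith [mul_pos (sub_pos.mpr hx12) h015, mul_pos (sub_pos.mpr hx15) (neg_pos.mpr h012)]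
    have := (mul_pos_iff_of_pos_left (sub_pos.mpr hx01)).mp hp
    linarith
  have h026 : 0 < (x 6 - x 2) * y 0 - (x 6 - x 0) * y 2 + (x 2 - x 0) * y 6 := by
    have hp : 0 < (x 1 - x 0) * ((x 6 - x 2) * y 0 - (x 6 - x 0) * y 2 + (x 2 - x 0) * y 6) := by linarith [mul_pos (sub_pos.mpr hx02) h016, mul_pos (sub_pos.mpr hx06) (neg_pos.mpr h012)]
    have := (mul_pos_iff_of_pos_left (sub_pos.mpr hx01)).mp hp
    linarith
  have h126 : 0 < (x 6 - x 2) * y 1 - (x 6 - x 1) * y 2 + (x 2 - x 1) * y 6 := by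
    have hp : 0 < (x 1 - x 0) * ((x 6 - x 2) * y 1 - (x 6 - x 1) * y 2 + (x 2 - x 1) * y 6) := by linarith [mul_pos (sub_pos.mpr hx12) h016, mul_pos (sub_pos.mpr hx16) (neg_pos.mpr h012)]
    have := (mul_pos_iff_of_pos_left (sub_pos.mpr hx01)).mp hp
    linarith
  have h234 : (x 4 - x 3) * y 2 - (x 4 - x 2) * y 3 + (x 3 - x 2) * y 4 < 0 := by
    have hp : 0 < (x 4 - x 1) * (-((x 4 - x 3) * y 2 - (x 4 - x 2) * y 3 + (x 3 - x 2) * y 4)) := by linarith [mul_pos (sub_pos.mpr hx24) (neg_pos.mpr h134), mul_pos (sub_pos.mpr hx34) h124]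
    have := (mul_pos_iff_of_pos_left (sub_pos.mpr hx14)).mp hp
    linarith
  have h235 : (x 5 - x 3) * y 2 - (x 5 - x 2) * y 3 + (x 3 - x 2) * y 5 < 0 := by
    have hp : 0 < (x 5 - x 1) * (-((x 5 - x 3) * y 2 - (x 5 - x 2) * y 3 + (x 3 - x 2) * y 5)) := by linarith [mul_pos (sub_pos.mpr hx25) (neg_pos.mpr h135), mul_pos (sub_pos.mpr hx35) h125]
    have := (mul_pos_iff_of_pos_left (sub_pos.mpr hx15)).mp hp
    linarith
  have h136 : 0 < (x 6 - x 3) * y 1 - (x 6 - x 1) * y 3 + (x 3 - x 1) * y 6 := by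
    have hp : 0 < (x 6 - x 2) * ((x 6 - x 3) * y 1 - (x 6 - x 1) * y 3 + (x 3 - x 1) * y 6) := by linarith [mul_pos (sub_pos.mpr hx16) h236, mul_pos (sub_pos.mpr hx36) h126]
    have := (mul_pos_iff_of_pos_left (sub_pos.mpr hx26)).mp hp
    linarith
  have h145 : 0 < (x 5 - x 4) * y 1 - (x 5 - x 1) * y 4 + (x 4 - x 1) * y 5 := by
    have hp : 0 < (x 5 - x 2) * ((x 5 - x 4) * y 1 - (x 5 - x 1) * y 4 + (x 4 - x 1) * y 5) := by linarith [mul_pos (sub_pos.mpr hx15) h245, mul_pos (sub_pos.mpr hx45) h125]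
    have := (mul_pos_iff_of_pos_left (sub_pos.mpr hx25)).mp hp
    linarith
  have h146 : 0 < (x 6 - x 4) * y 1 - (x 6 - x 1) * y 4 + (x 4 - x 1) * y 6 := by
    have hp : 0 < (x 6 - x 2) * ((x 6 - x 4) * y 1 - (x 6 - x 1) * y 4 + (x 4 - x 1) * y 6) := by linarith [mul_pos (sub_pos.mpr hx16) h246, mul_pos (sub_pos.mpr hx46) h126]
    have := (mul_pos_iff_of_pos_left (sub_pos.mpr hx26)).mp hp
    linarith
  have h156 : 0 < (x 6 - x 5) * y 1 - (x 6 - x 1) * y 5 + (x 5 - x 1) * y 6 := by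
    have hp : 0 < (x 6 - x 2) * ((x 6 - x 5) * y 1 - (x 6 - x 1) * y 5 + (x 5 - x 1) * y 6) := by linarith [mul_pos (sub_pos.mpr hx16) h256, mul_pos (sub_pos.mpr hx56) h126]
    have := (mul_pos_iff_of_pos_left (sub_pos.mpr hx26)).mp hp
    linarith
  intro i k hik
  fin_cases i <;> fin_cases k
  · exact absurd hik (by decide)
  · exact iff_of_true (Or.inl rfl) (by unfold GpEdge; decide)
  · refine iff_of_false (fun hs => ?_) (by unfold GpEdge; decide)
    rcases hs with hc | hall
    · exact absurd hc (by decide)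
    · exact absurd (hall 1 (by decide) (by decide)) (not_lt.mpr (le_of_lt h012))
  · refine iff_of_true (Or.inr fun j hj1 hj2 => ?_) (by unfold GpEdge; decide)
    fin_cases j
    · exact absurd hj1 (by decide)
    · exact h013
    · exact h023
    · exact absurd hj2 (by decide)
    · exact absurd hj2 (by decide)
    · exact absurd hj2 (by decide)
    · exact absurd hj2 (by decide)
  · refine iff_of_true (Or.inr fun j hj1 hj2 => ?_) (by unfold GpEdge; decide)
    fin_cases j
    · exact absurd hj1 (by decide)
    · exact h014
    · exact h024
    · exact h034
    · exact absurd hj2 (by decide)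
    · exact absurd hj2 (by decide)
    · exact absurd hj2 (by decide)
  · refine iff_of_true (Or.inr fun j hj1 hj2 => ?_) (by unfold GpEdge; decide)
    fin_cases j
    · exact absurd hj1 (by decide)
    · exact h015
    · exact h025
    · exact h035
    · exact h045
    · exact absurd hj2 (by decide)
    · exact absurd hj2 (by decide)
  · refine iff_of_true (Or.inr fun j hj1 hj2 => ?_) (by unfold GpEdge; decide)
    fin_cases j
    · exact absurd hj1 (by decide)
    · exact h016
    · exact h026
    · exact h036
    · exact h046
    · exact h056
    · exact absurd hj2 (by decide)
  · exact absurd hik (by decide)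
  · exact absurd hik (by decide)
  · exact iff_of_true (Or.inl rfl) (by unfold GpEdge; decide)
  · refine iff_of_true (Or.inr fun j hj1 hj2 => ?_) (by unfold GpEdge; decide)
    fin_cases j
    · exact absurd hj1 (by decide)
    · exact absurd hj1 (by decide)
    · exact h123
    · exact absurd hj2 (by decide)
    · exact absurd hj2 (by decide)
    · exact absurd hj2 (by decide)
    · exact absurd hj2 (by decide)
  · refine iff_of_false (fun hs => ?_) (by unfold GpEdge; decide)
    rcases hs with hc | hall
    · exact absurd hc (by decide)
    · exact absurd (hall 3 (by decide) (by decide)) (not_lt.mpr (le_of_lt h134))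
  · refine iff_of_false (fun hs => ?_) (by unfold GpEdge; decide)
    rcases hs with hc | hall
    · exact absurd hc (by decide)
    · exact absurd (hall 3 (by decide) (by decide)) (not_lt.mpr (le_of_lt h135))
  · refine iff_of_true (Or.inr fun j hj1 hj2 => ?_) (by unfold GpEdge; decide)
    fin_cases j
    · exact absurd hj1 (by decide)
    · exact absurd hj1 (by decide)
    · exact h126
    · exact h136
    · exact h146
    · exact h156
    · exact absurd hj2 (by decide)
  · exact absurd hik (by decide)
  · exact absurd hik (by decide)
  · exact absurd hik (by decide)
  · exact iff_of_true (Or.inl rfl) (by unfold GpEdge; decide)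
  · refine iff_of_false (fun hs => ?_) (by unfold GpEdge; decide)
    rcases hs with hc | hall
    · exact absurd hc (by decide)
    · exact absurd (hall 3 (by decide) (by decide)) (not_lt.mpr (le_of_lt h234))
  · refine iff_of_false (fun hs => ?_) (by unfold GpEdge; decide)
    rcases hs with hc | hall
    · exact absurd hc (by decide)
    · exact absurd (hall 3 (by decide) (by decide)) (not_lt.mpr (le_of_lt h235))
  · refine iff_of_true (Or.inr fun j hj1 hj2 => ?_) (by unfold GpEdge; decide)
    fin_cases j
    · exact absurd hj1 (by decide)
    · exact absurd hj1 (by decide)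
    · exact absurd hj1 (by decide)
    · exact h236
    · exact h246
    · exact h256
    · exact absurd hj2 (by decide)
  · exact absurd hik (by decide)
  · exact absurd hik (by decide)
  · exact absurd hik (by decide)
  · exact absurd hik (by decide)
  · exact iff_of_true (Or.inl rfl) (by unfold GpEdge; decide)
  · refine iff_of_true (Or.inr fun j hj1 hj2 => ?_) (by unfold GpEdge; decide)
    fin_cases j
    · exact absurd hj1 (by decide)
    · exact absurd hj1 (by decide)
    · exact absurd hj1 (by decide)
    · exact absurd hj1 (by decide)
    · exact h345
    · exact absurd hj2 (by decide)
    · exact absurd hj2 (by decide)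
  · refine iff_of_true (Or.inr fun j hj1 hj2 => ?_) (by unfold GpEdge; decide)
    fin_cases j
    · exact absurd hj1 (by decide)
    · exact absurd hj1 (by decide)
    · exact absurd hj1 (by decide)
    · exact absurd hj1 (by decide)
    · exact h346
    · exact h356
    · exact absurd hj2 (by decide)
  · exact absurd hik (by decide)
  · exact absurd hik (by decide)
  · exact absurd hik (by decide)
  · exact absurd hik (by decide)
  · exact absurd hik (by decide)
  · exact iff_of_true (Or.inl rfl) (by unfold GpEdge; decide)
  · refine iff_of_false (fun hs => ?_) (by unfold GpEdge; decide)
    rcases hs with hc | hall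
    · exact absurd hc (by decide)
    · exact absurd (hall 5 (by decide) (by decide)) (not_lt.mpr (le_of_lt h456))
  · exact absurd hik (by decide)
  · exact absurd hik (by decide)
  · exact absurd hik (by decide)
  · exact absurd hik (by decide)
  · exact absurd hik (by decide)
  · exact absurd hik (by decide)
  · exact iff_of_true (Or.inl rfl) (by unfold GpEdge; decide)
  · exact absurd hik (by decide)
  · exact absurd hik (by decide)
  · exact absurd hik (by decide)
  · exact absurd hik (by decide)
  · exact absurd hik (by decide)
  · exact absurd hik (by decide)
  · exact absurd hik (by decide)
end

section
/- Let x_0 < x_1 < … < x_6 and y_0, …, y_6 be real numbers such that the terrain with points p_i = (x_i, y_i) has visibility graph exactly G'. Then: p_3 is strictly below the segment p_0 p_4; p_3 is strictly below the segment p_2 p_6; p_5 is strictly below the segment p_3 p_6; p_1 lies on or above the segment p_0 p_2; p_3 lies on or above the segment p_1 p_5; and p_5 lies on or above the segment p_4 p_6. -/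
theorem Gp_terrain_satisfies_constraints (x y : Fin 7 → ℝ) (hx : StrictMono x)
    (hvg : ∀ i k : Fin 7, i < k → (Sees x y i k ↔ GpEdge (i : ℕ) (k : ℕ))) :
    StrictlyBelow x y 0 3 4 ∧
    StrictlyBelow x y 2 3 6 ∧
    StrictlyBelow x y 3 5 6 ∧
    OnOrAbove x y 0 1 2 ∧
    OnOrAbove x y 1 3 5 ∧
    OnOrAbove x y 4 5 6 := by
  -- positive visibility facts
  have h04 : Sees x y 0 4 := (hvg 0 4 (by decide)).mpr (by unfold GpEdge; decide)
  have h26 : Sees x y 2 6 := (hvg 2 6 (by decide)).mpr (by unfold GpEdge; decide)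
  have h36 : Sees x y 3 6 := (hvg 3 6 (by decide)).mpr (by unfold GpEdge; decide)
  have h13 : Sees x y 1 3 := (hvg 1 3 (by decide)).mpr (by unfold GpEdge; decide)
  have h35 : Sees x y 3 5 := (hvg 3 5 (by decide)).mpr (by unfold GpEdge; decide)
  -- negative visibility facts
  have n02 : ¬ Sees x y 0 2 := fun hs =>
    absurd ((hvg 0 2 (by decide)).mp hs) (by unfold GpEdge; decide)
  have n15 : ¬ Sees x y 1 5 := fun hs =>
    absurd ((hvg 1 5 (by decide)).mp hs) (by unfold GpEdge; decide)
  have n46 : ¬ Sees x y 4 6 := fun hs =>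
    absurd ((hvg 4 6 (by decide)).mp hs) (by unfold GpEdge; decide)
  have hb034 : StrictlyBelow x y 0 3 4 := by
    rcases h04 with h | h
    · exact absurd h (by decide)
    · exact h 3 (by decide) (by decide)
  have hb236 : StrictlyBelow x y 2 3 6 := by
    rcases h26 with h | h
    · exact absurd h (by decide)
    · exact h 3 (by decide) (by decide)
  have hb356 : StrictlyBelow x y 3 5 6 := by
    rcases h36 with h | h
    · exact absurd h (by decide)
    · exact h 5 (by decide) (by decide)
  have hb123 : StrictlyBelow x y 1 2 3 := by
    rcases h13 with h | h
    · exact absurd h (by decide)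
    · exact h 2 (by decide) (by decide)
  have hb345 : StrictlyBelow x y 3 4 5 := by
    rcases h35 with h | h
    · exact absurd h (by decide)
    · exact h 4 (by decide) (by decide)
  have ha012 : OnOrAbove x y 0 1 2 := by
    simp only [Sees, not_or, not_forall] at n02
    obtain ⟨-, j, hj1, hj2, hj3⟩ := n02
    fin_cases j <;>
      first
        | exact absurd hj1 (by decide)
        | exact absurd hj2 (by decide)
        | exact le_of_not_gt hj3
  have ha456 : OnOrAbove x y 4 5 6 := by
    simp only [Sees, not_or, not_forall] at n46
    obtain ⟨-, j, hj1, hj2, hj3⟩ := n46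
    fin_cases j <;>
      first
        | exact absurd hj1 (by decide)
        | exact absurd hj2 (by decide)
        | exact le_of_not_gt hj3
  have ha135 : OnOrAbove x y 1 3 5 := by
    by_contra hc
    have hc' : StrictlyBelow x y 1 3 5 := lt_of_not_ge hc
    simp only [Sees, not_or, not_forall] at n15
    obtain ⟨-, j, hj1, hj2, hj3⟩ := n15
    have h12 : x 1 < x 2 := hx (by decide)
    have h23 : x 2 < x 3 := hx (by decide)
    have h34 : x 3 < x 4 := hx (by decide)
    have h45 : x 4 < x 5 := hx (by decide)
    fin_cases j
    · exact absurd hj1 (by decide)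
    · exact absurd hj1 (by decide)
    · -- j = 2 : 2 below seg(1,3), 3 below seg(1,5) ⇒ 2 below seg(1,5)
      have hle : (x 5 - x 2) * y 1 - (x 5 - x 1) * y 2 + (x 2 - x 1) * y 5 ≤ 0 :=
        le_of_not_gt hj3
      simp only [StrictlyBelow] at hb123 hc'
      nlinarith [mul_pos hb123 (sub_pos.mpr (show x 1 < x 5 by linarith)),
        mul_pos hc' (sub_pos.mpr h12), sub_pos.mpr h23, sub_pos.mpr h34]
    · exact hj3 hc'
    · -- j = 4 : 4 below seg(3,5), 3 below seg(1,5) ⇒ 4 below seg(1,5)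
      have hle : (x 5 - x 4) * y 1 - (x 5 - x 1) * y 4 + (x 4 - x 1) * y 5 ≤ 0 :=
        le_of_not_gt hj3
      simp only [StrictlyBelow] at hb345 hc'
      nlinarith [mul_pos hb345 (sub_pos.mpr (show x 1 < x 5 by linarith)),
        mul_pos hc' (sub_pos.mpr h45), sub_pos.mpr h23, sub_pos.mpr h34]
    · exact absurd hj2 (by decide)
    · exact absurd hj2 (by decide)
  exact ⟨hb034, hb236, hb356, ha012, ha135, ha456⟩
end

section
/- Let x_0 < x_1 < … < x_6 be real numbers with d_{0,1}·d_{2,3}·d_{3,4}·d_{5,6} ≤ d_{1,2}·d_{4,5}·d_{0,3}·d_{3,6}, where d_{i,j} = x_j − x_i. Then there exist NO real numbers y_0, …, y_6 satisfying simultaneously: p_3 strictly below the segment p_0 p_4, p_3 strictly below the segment p_2 p_6, p_5 strictly below the segment p_3 p_6, p_1 on or above the segment p_0 p_2, p_3 on or above the segment p_1 p_5, and p_5 on or above the segment p_4 p_6 (where p_i = (x_i, y_i)). In particular, no y satisfies all six G'-constraints with the above/below conditions strict. -/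
theorem no_y_when_inequality_fails (x0 x1 x2 x3 x4 x5 x6 : ℝ)
    (h01 : x0 < x1) (h12 : x1 < x2) (h23 : x2 < x3)
    (h34 : x3 < x4) (h45 : x4 < x5) (h56 : x5 < x6)
    (hd : (x1 - x0) * (x3 - x2) * (x4 - x3) * (x6 - x5) ≤
          (x2 - x1) * (x5 - x4) * (x3 - x0) * (x6 - x3)) :
    ¬ ∃ y0 y1 y2 y3 y4 y5 y6 : ℝ,
      ((x4 - x3) * y0 - (x4 - x0) * y3 + (x3 - x0) * y4 > 0) ∧
      ((x6 - x3) * y2 - (x6 - x2) * y3 + (x3 - x2) * y6 > 0) ∧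
      ((x6 - x5) * y3 - (x6 - x3) * y5 + (x5 - x3) * y6 > 0) ∧
      ((x2 - x1) * y0 - (x2 - x0) * y1 + (x1 - x0) * y2 ≤ 0) ∧
      ((x5 - x3) * y1 - (x5 - x1) * y3 + (x3 - x1) * y5 ≤ 0) ∧
      ((x6 - x5) * y4 - (x6 - x4) * y5 + (x5 - x4) * y6 ≤ 0) := by
  rintro ⟨y0, y1, y2, y3, y4, y5, y6, hA, hB, hC, hD, hE, hF⟩
  have p01 : (0:ℝ) < x1 - x0 := by linarith
  have p12 : (0:ℝ) < x2 - x1 := by linarith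
  have p23 : (0:ℝ) < x3 - x2 := by linarith
  have p34 : (0:ℝ) < x4 - x3 := by linarith
  have p45 : (0:ℝ) < x5 - x4 := by linarith
  have p56 : (0:ℝ) < x6 - x5 := by linarith
  have p02 : (0:ℝ) < x2 - x0 := by linarith
  have p35 : (0:ℝ) < x5 - x3 := by linarith
  have p36 : (0:ℝ) < x6 - x3 := by linarith
  have p03 : (0:ℝ) < x3 - x0 := by linarith
  set a : ℝ := (x2-x1)*(x5-x3)*(x6-x5)*(x6-x3)*(x5-x3) with ha_def
  set b : ℝ := (x4-x3)*(x1-x0)*(x5-x3)*(x6-x5)*(x5-x3) with hb_def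
  set c : ℝ := (x5-x3)*((x2-x1)*(x5-x4)*(x3-x0)*(x6-x3)-(x1-x0)*(x3-x2)*(x4-x3)*(x6-x5)) with hc_def
  set d : ℝ := (x4-x3)*(x5-x3)*(x6-x5)*(x6-x3)*(x5-x3) with hd_def
  set e : ℝ := (x4-x3)*(x2-x0)*(x6-x5)*(x6-x3)*(x5-x3) with he_def
  set f : ℝ := (x2-x1)*(x5-x3)*(x3-x0)*(x6-x3)*(x5-x3) with hf_def
  have ha : 0 < a := by positivity
  have hb : 0 < b := by positivity
  have hc : 0 ≤ c := by
    rw [hc_def]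
    have : 0 ≤ (x2-x1)*(x5-x4)*(x3-x0)*(x6-x3)-(x1-x0)*(x3-x2)*(x4-x3)*(x6-x5) := by
      linarith
    positivity
  have hdp : 0 < d := by positivity
  have hep : 0 < e := by positivity
  have hfp : 0 < f := by positivity
  have key : a * ((x4 - x3) * y0 - (x4 - x0) * y3 + (x3 - x0) * y4)
      + b * ((x6 - x3) * y2 - (x6 - x2) * y3 + (x3 - x2) * y6)
      + c * ((x6 - x5) * y3 - (x6 - x3) * y5 + (x5 - x3) * y6)
      - d * ((x2 - x1) * y0 - (x2 - x0) * y1 + (x1 - x0) * y2)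
      - e * ((x5 - x3) * y1 - (x5 - x1) * y3 + (x3 - x1) * y5)
      - f * ((x6 - x5) * y4 - (x6 - x4) * y5 + (x5 - x4) * y6) = 0 := by
    rw [ha_def, hb_def, hc_def, hd_def, he_def, hf_def]; ring
  have t1 : 0 < a * ((x4 - x3) * y0 - (x4 - x0) * y3 + (x3 - x0) * y4) := mul_pos ha hA
  have t2 : 0 < b * ((x6 - x3) * y2 - (x6 - x2) * y3 + (x3 - x2) * y6) := mul_pos hb hB
  have t3 : 0 ≤ c * ((x6 - x5) * y3 - (x6 - x3) * y5 + (x5 - x3) * y6) := mul_nonneg hc hC.le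
  have t4 : d * ((x2 - x1) * y0 - (x2 - x0) * y1 + (x1 - x0) * y2) ≤ 0 :=
    mul_nonpos_of_nonneg_of_nonpos hdp.le hD
  have t5 : e * ((x5 - x3) * y1 - (x5 - x1) * y3 + (x3 - x1) * y5) ≤ 0 :=
    mul_nonpos_of_nonneg_of_nonpos hep.le hE
  have t6 : f * ((x6 - x5) * y4 - (x6 - x4) * y5 + (x5 - x4) * y6) ≤ 0 :=
    mul_nonpos_of_nonneg_of_nonpos hfp.le hF
  linarith
end

section
/- For any strictly increasing x : Fin 35 → ℝ and any y : Fin 35 → ℝ, it is NOT the case that for every one of the five color tuples (c_0, …, c_6) the points q_i = (x_{c_i}, y_{c_i}) simultaneously satisfy: q_3 strictly below the segment q_0 q_4, q_3 strictly below the segment q_2 q_6, q_5 strictly below the segment q_3 q_6, q_1 on or above the segment q_0 q_2, q_3 on or above the segment q_1 q_5, and q_5 on or above the segment q_4 q_6. -/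
/-- The six G'-constraints for seven points `q i = (a i, b i)`:
`q 3` strictly below segment `q 0 q 4`, `q 3` strictly below `q 2 q 6`,
`q 5` strictly below `q 3 q 6`, `q 1` on or above `q 0 q 2`,
`q 3` on or above `q 1 q 5`, and `q 5` on or above `q 4 q 6`. -/
def Constraints (a0 a1 a2 a3 a4 a5 a6 b0 b1 b2 b3 b4 b5 b6 : ℝ) : Prop :=
  ((a4 - a3) * b0 - (a4 - a0) * b3 + (a3 - a0) * b4 > 0) ∧
  ((a6 - a3) * b2 - (a6 - a2) * b3 + (a3 - a2) * b6 > 0) ∧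
  ((a6 - a5) * b3 - (a6 - a3) * b5 + (a5 - a3) * b6 > 0) ∧
  ((a2 - a1) * b0 - (a2 - a0) * b1 + (a1 - a0) * b2 ≤ 0) ∧
  ((a5 - a3) * b1 - (a5 - a1) * b3 + (a3 - a1) * b5 ≤ 0) ∧
  ((a6 - a5) * b4 - (a6 - a4) * b5 + (a5 - a4) * b6 ≤ 0)

lemma key_lemma (a0 a1 a2 a3 a4 a5 a6 b0 b1 b2 b3 b4 b5 b6 : ℝ)
    (h01 : a0 < a1) (h12 : a1 < a2) (h23 : a2 < a3) (h34 : a3 < a4)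
    (h45 : a4 < a5) (h56 : a5 < a6)
    (hc : Constraints a0 a1 a2 a3 a4 a5 a6 b0 b1 b2 b3 b4 b5 b6) :
    (a2 - a1) * (a5 - a4) * (a3 - a0) * (a6 - a3) <
      (a1 - a0) * (a3 - a2) * (a4 - a3) * (a6 - a5) := by
  by_contra hR
  push_neg at hR
  obtain ⟨hP1, hP2, hP3, hQ1, hQ2, hQ3⟩ := hc
  have t1 : 0 < (a2 - a1) * (a5 - a3) * (a6 - a3) * (a6 - a5) ^ 2 *
      ((a4 - a3) * b0 - (a4 - a0) * b3 + (a3 - a0) * b4) :=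
    mul_pos (mul_pos (mul_pos (mul_pos (by linarith) (by linarith)) (by linarith))
      (pow_pos (by linarith : (0:ℝ) < a6 - a5) 2)) hP1
  have t2 : 0 < (a1 - a0) * (a4 - a3) * (a5 - a3) * (a6 - a5) ^ 2 *
      ((a6 - a3) * b2 - (a6 - a2) * b3 + (a3 - a2) * b6) :=
    mul_pos (mul_pos (mul_pos (mul_pos (by linarith) (by linarith)) (by linarith))
      (pow_pos (by linarith : (0:ℝ) < a6 - a5) 2)) hP2
  have t3 : 0 ≤ (a6 - a5) *
      ((a2 - a1) * (a5 - a4) * (a3 - a0) * (a6 - a3) -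
        (a1 - a0) * (a3 - a2) * (a4 - a3) * (a6 - a5)) *
      ((a6 - a5) * b3 - (a6 - a3) * b5 + (a5 - a3) * b6) :=
    mul_nonneg (mul_nonneg (by linarith) (by linarith)) hP3.le
  have t4 : 0 ≤ (a4 - a3) * (a5 - a3) * (a6 - a3) * (a6 - a5) ^ 2 *
      (-((a2 - a1) * b0 - (a2 - a0) * b1 + (a1 - a0) * b2)) :=
    mul_nonneg (mul_pos (mul_pos (mul_pos (by linarith) (by linarith)) (by linarith))
      (pow_pos (by linarith : (0:ℝ) < a6 - a5) 2)).le (by linarith)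
  have t5 : 0 ≤ (a2 - a0) * (a4 - a3) * (a6 - a3) * (a6 - a5) ^ 2 *
      (-((a5 - a3) * b1 - (a5 - a1) * b3 + (a3 - a1) * b5)) :=
    mul_nonneg (mul_pos (mul_pos (mul_pos (by linarith) (by linarith)) (by linarith))
      (pow_pos (by linarith : (0:ℝ) < a6 - a5) 2)).le (by linarith)
  have t6 : 0 ≤ (a3 - a0) * (a2 - a1) * (a5 - a3) * (a6 - a3) * (a6 - a5) *
      (-((a6 - a5) * b4 - (a6 - a4) * b5 + (a5 - a4) * b6)) :=
    mul_nonneg (mul_pos (mul_pos (mul_pos (mul_pos (by linarith) (by linarith))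
      (by linarith)) (by linarith)) (by linarith)).le (by linarith)
  have hid : (a2 - a1) * (a5 - a3) * (a6 - a3) * (a6 - a5) ^ 2 *
      ((a4 - a3) * b0 - (a4 - a0) * b3 + (a3 - a0) * b4) +
      (a1 - a0) * (a4 - a3) * (a5 - a3) * (a6 - a5) ^ 2 *
      ((a6 - a3) * b2 - (a6 - a2) * b3 + (a3 - a2) * b6) +
      (a6 - a5) *
      ((a2 - a1) * (a5 - a4) * (a3 - a0) * (a6 - a3) -
        (a1 - a0) * (a3 - a2) * (a4 - a3) * (a6 - a5)) *
      ((a6 - a5) * b3 - (a6 - a3) * b5 + (a5 - a3) * b6) +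
      (a4 - a3) * (a5 - a3) * (a6 - a3) * (a6 - a5) ^ 2 *
      (-((a2 - a1) * b0 - (a2 - a0) * b1 + (a1 - a0) * b2)) +
      (a2 - a0) * (a4 - a3) * (a6 - a3) * (a6 - a5) ^ 2 *
      (-((a5 - a3) * b1 - (a5 - a1) * b3 + (a3 - a1) * b5)) +
      (a3 - a0) * (a2 - a1) * (a5 - a3) * (a6 - a3) * (a6 - a5) *
      (-((a6 - a5) * b4 - (a6 - a4) * b5 + (a5 - a4) * b6)) = 0 := by ring
  linarith

theorem not_all_colors_constrained (x y : Fin 35 → ℝ) (hx : StrictMono x) :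
    ¬ (Constraints (x 0) (x 1) (x 6) (x 7) (x 8) (x 11) (x 12)
         (y 0) (y 1) (y 6) (y 7) (y 8) (y 11) (y 12) ∧
       Constraints (x 2) (x 3) (x 19) (x 20) (x 21) (x 24) (x 25)
         (y 2) (y 3) (y 19) (y 20) (y 21) (y 24) (y 25) ∧
       Constraints (x 4) (x 5) (x 16) (x 17) (x 18) (x 29) (x 30)
         (y 4) (y 5) (y 16) (y 17) (y 18) (y 29) (y 30) ∧
       Constraints (x 9) (x 10) (x 13) (x 14) (x 15) (x 31) (x 32)
         (y 9) (y 10) (y 13) (y 14) (y 15) (y 31) (y 32) ∧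
       Constraints (x 22) (x 23) (x 26) (x 27) (x 28) (x 33) (x 34)
         (y 22) (y 23) (y 26) (y 27) (y 28) (y 33) (y 34)) := by
  rintro ⟨hc1, hc2, hc3, hc4, hc5⟩
  have d0_1 : (0:ℝ) < x 1 - x 0 := sub_pos.mpr (hx (by decide))
  have d0_7 : (0:ℝ) < x 7 - x 0 := sub_pos.mpr (hx (by decide))
  have d1_6 : (0:ℝ) < x 6 - x 1 := sub_pos.mpr (hx (by decide))
  have d2_3 : (0:ℝ) < x 3 - x 2 := sub_pos.mpr (hx (by decide))
  have d2_20 : (0:ℝ) < x 20 - x 2 := sub_pos.mpr (hx (by decide))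
  have d3_19 : (0:ℝ) < x 19 - x 3 := sub_pos.mpr (hx (by decide))
  have d4_5 : (0:ℝ) < x 5 - x 4 := sub_pos.mpr (hx (by decide))
  have d4_17 : (0:ℝ) < x 17 - x 4 := sub_pos.mpr (hx (by decide))
  have d5_16 : (0:ℝ) < x 16 - x 5 := sub_pos.mpr (hx (by decide))
  have d6_7 : (0:ℝ) < x 7 - x 6 := sub_pos.mpr (hx (by decide))
  have d7_8 : (0:ℝ) < x 8 - x 7 := sub_pos.mpr (hx (by decide))
  have d7_12 : (0:ℝ) < x 12 - x 7 := sub_pos.mpr (hx (by decide))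
  have d8_11 : (0:ℝ) < x 11 - x 8 := sub_pos.mpr (hx (by decide))
  have d9_10 : (0:ℝ) < x 10 - x 9 := sub_pos.mpr (hx (by decide))
  have d9_14 : (0:ℝ) < x 14 - x 9 := sub_pos.mpr (hx (by decide))
  have d10_13 : (0:ℝ) < x 13 - x 10 := sub_pos.mpr (hx (by decide))
  have d11_12 : (0:ℝ) < x 12 - x 11 := sub_pos.mpr (hx (by decide))
  have d13_14 : (0:ℝ) < x 14 - x 13 := sub_pos.mpr (hx (by decide))
  have d14_15 : (0:ℝ) < x 15 - x 14 := sub_pos.mpr (hx (by decide))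
  have d14_32 : (0:ℝ) < x 32 - x 14 := sub_pos.mpr (hx (by decide))
  have d15_31 : (0:ℝ) < x 31 - x 15 := sub_pos.mpr (hx (by decide))
  have d16_17 : (0:ℝ) < x 17 - x 16 := sub_pos.mpr (hx (by decide))
  have d17_18 : (0:ℝ) < x 18 - x 17 := sub_pos.mpr (hx (by decide))
  have d17_30 : (0:ℝ) < x 30 - x 17 := sub_pos.mpr (hx (by decide))
  have d18_29 : (0:ℝ) < x 29 - x 18 := sub_pos.mpr (hx (by decide))
  have d19_20 : (0:ℝ) < x 20 - x 19 := sub_pos.mpr (hx (by decide))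
  have d20_21 : (0:ℝ) < x 21 - x 20 := sub_pos.mpr (hx (by decide))
  have d20_25 : (0:ℝ) < x 25 - x 20 := sub_pos.mpr (hx (by decide))
  have d21_24 : (0:ℝ) < x 24 - x 21 := sub_pos.mpr (hx (by decide))
  have d22_23 : (0:ℝ) < x 23 - x 22 := sub_pos.mpr (hx (by decide))
  have d22_27 : (0:ℝ) < x 27 - x 22 := sub_pos.mpr (hx (by decide))
  have d23_26 : (0:ℝ) < x 26 - x 23 := sub_pos.mpr (hx (by decide))
  have d24_25 : (0:ℝ) < x 25 - x 24 := sub_pos.mpr (hx (by decide))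
  have d26_27 : (0:ℝ) < x 27 - x 26 := sub_pos.mpr (hx (by decide))
  have d27_28 : (0:ℝ) < x 28 - x 27 := sub_pos.mpr (hx (by decide))
  have d27_34 : (0:ℝ) < x 34 - x 27 := sub_pos.mpr (hx (by decide))
  have d28_33 : (0:ℝ) < x 33 - x 28 := sub_pos.mpr (hx (by decide))
  have d29_30 : (0:ℝ) < x 30 - x 29 := sub_pos.mpr (hx (by decide))
  have d31_32 : (0:ℝ) < x 32 - x 31 := sub_pos.mpr (hx (by decide))
  have d33_34 : (0:ℝ) < x 34 - x 33 := sub_pos.mpr (hx (by decide))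
  have K1 := key_lemma _ _ _ _ _ _ _ _ _ _ _ _ _ _ (by linarith [d0_1]) (by linarith [d1_6]) (by linarith [d6_7]) (by linarith [d7_8]) (by linarith [d8_11]) (by linarith [d11_12]) hc1
  have K2 := key_lemma _ _ _ _ _ _ _ _ _ _ _ _ _ _ (by linarith [d2_3]) (by linarith [d3_19]) (by linarith [d19_20]) (by linarith [d20_21]) (by linarith [d21_24]) (by linarith [d24_25]) hc2
  have K3 := key_lemma _ _ _ _ _ _ _ _ _ _ _ _ _ _ (by linarith [d4_5]) (by linarith [d5_16]) (by linarith [d16_17]) (by linarith [d17_18]) (by linarith [d18_29]) (by linarith [d29_30]) hc3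
  have K4 := key_lemma _ _ _ _ _ _ _ _ _ _ _ _ _ _ (by linarith [d9_10]) (by linarith [d10_13]) (by linarith [d13_14]) (by linarith [d14_15]) (by linarith [d15_31]) (by linarith [d31_32]) hc4
  have K5 := key_lemma _ _ _ _ _ _ _ _ _ _ _ _ _ _ (by linarith [d22_23]) (by linarith [d23_26]) (by linarith [d26_27]) (by linarith [d27_28]) (by linarith [d28_33]) (by linarith [d33_34]) hc5
  have hB1 : (0:ℝ) < (x 6 - x 1) * (x 11 - x 8) * (x 7 - x 0) * (x 12 - x 7) := mul_pos (mul_pos (mul_pos d1_6 d8_11) d0_7) d7_12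
  have hS1 : (0:ℝ) < (x 1 - x 0) * (x 7 - x 6) * (x 8 - x 7) * (x 12 - x 11) := mul_pos (mul_pos (mul_pos d0_1 d6_7) d7_8) d11_12
  have hB2 : (0:ℝ) < (x 19 - x 3) * (x 24 - x 21) * (x 20 - x 2) * (x 25 - x 20) := mul_pos (mul_pos (mul_pos d3_19 d21_24) d2_20) d20_25
  have hS2 : (0:ℝ) < (x 3 - x 2) * (x 20 - x 19) * (x 21 - x 20) * (x 25 - x 24) := mul_pos (mul_pos (mul_pos d2_3 d19_20) d20_21) d24_25
  have hB3 : (0:ℝ) < (x 16 - x 5) * (x 29 - x 18) * (x 17 - x 4) * (x 30 - x 17) := mul_pos (mul_pos (mul_pos d5_16 d18_29) d4_17) d17_30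
  have hS3 : (0:ℝ) < (x 5 - x 4) * (x 17 - x 16) * (x 18 - x 17) * (x 30 - x 29) := mul_pos (mul_pos (mul_pos d4_5 d16_17) d17_18) d29_30
  have hB4 : (0:ℝ) < (x 13 - x 10) * (x 31 - x 15) * (x 14 - x 9) * (x 32 - x 14) := mul_pos (mul_pos (mul_pos d10_13 d15_31) d9_14) d14_32
  have hS4 : (0:ℝ) < (x 10 - x 9) * (x 14 - x 13) * (x 15 - x 14) * (x 32 - x 31) := mul_pos (mul_pos (mul_pos d9_10 d13_14) d14_15) d31_32
  have hB5 : (0:ℝ) < (x 26 - x 23) * (x 33 - x 28) * (x 27 - x 22) * (x 34 - x 27) := mul_pos (mul_pos (mul_pos d23_26 d28_33) d22_27) d27_34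
  have hS5 : (0:ℝ) < (x 23 - x 22) * (x 27 - x 26) * (x 28 - x 27) * (x 34 - x 33) := mul_pos (mul_pos (mul_pos d22_23 d26_27) d27_28) d33_34
  have hBp2 : (0:ℝ) < ((x 6 - x 1) * (x 11 - x 8) * (x 7 - x 0) * (x 12 - x 7)) * ((x 19 - x 3) * (x 24 - x 21) * (x 20 - x 2) * (x 25 - x 20)) := mul_pos hB1 hB2
  have hBp3 : (0:ℝ) < ((x 6 - x 1) * (x 11 - x 8) * (x 7 - x 0) * (x 12 - x 7)) * ((x 19 - x 3) * (x 24 - x 21) * (x 20 - x 2) * (x 25 - x 20)) * ((x 16 - x 5) * (x 29 - x 18) * (x 17 - x 4) * (x 30 - x 17)) := mul_pos hBp2 hB3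
  have hBp4 : (0:ℝ) < ((x 6 - x 1) * (x 11 - x 8) * (x 7 - x 0) * (x 12 - x 7)) * ((x 19 - x 3) * (x 24 - x 21) * (x 20 - x 2) * (x 25 - x 20)) * ((x 16 - x 5) * (x 29 - x 18) * (x 17 - x 4) * (x 30 - x 17)) * ((x 13 - x 10) * (x 31 - x 15) * (x 14 - x 9) * (x 32 - x 14)) := mul_pos hBp3 hB4
  have hlt : ((x 6 - x 1) * (x 11 - x 8) * (x 7 - x 0) * (x 12 - x 7)) * ((x 19 - x 3) * (x 24 - x 21) * (x 20 - x 2) * (x 25 - x 20)) * ((x 16 - x 5) * (x 29 - x 18) * (x 17 - x 4) * (x 30 - x 17)) * ((x 13 - x 10) * (x 31 - x 15) * (x 14 - x 9) * (x 32 - x 14)) * ((x 26 - x 23) * (x 33 - x 28) * (x 27 - x 22) * (x 34 - x 27)) < ((x 1 - x 0) * (x 7 - x 6) * (x 8 - x 7) * (x 12 - x 11)) * ((x 3 - x 2) * (x 20 - x 19) * (x 21 - x 20) * (x 25 - x 24)) * ((x 5 - x 4) * (x 17 - x 16) * (x 18 - x 17) * (x 30 - x 29)) * ((x 10 - x 9)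 * (x 14 - x 13) * (x 15 - x 14) * (x 32 - x 31)) * ((x 23 - x 22) * (x 27 - x 26) * (x 28 - x 27) * (x 34 - x 33)) :=
    mul_lt_mul'' (mul_lt_mul'' (mul_lt_mul'' (mul_lt_mul'' K1 K2 hB1.le hB2.le) K3 hBp2.le hB3.le) K4 hBp3.le hB4.le) K5 hBp4.le hB5.le
  have m0 : (x 1 - x 0) ≤ (x 7 - x 0) := sub_le_sub (hx.monotone (by decide)) (hx.monotone (by decide))
  have m1 : (x 7 - x 6) ≤ (x 16 - x 5) := sub_le_sub (hx.monotone (by decide)) (hx.monotone (by decide))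
  have m2 : (x 8 - x 7) ≤ (x 12 - x 7) := sub_le_sub (hx.monotone (by decide)) (hx.monotone (by decide))
  have m3 : (x 12 - x 11) ≤ (x 13 - x 10) := sub_le_sub (hx.monotone (by decide)) (hx.monotone (by decide))
  have m4 : (x 3 - x 2) ≤ (x 6 - x 1) := sub_le_sub (hx.monotone (by decide)) (hx.monotone (by decide))
  have m5 : (x 20 - x 19) ≤ (x 31 - x 15) := sub_le_sub (hx.monotone (by decide)) (hx.monotone (by decide))
  have m6 : (x 21 - x 20) ≤ (x 25 - x 20) := sub_le_sub (hx.monotone (by decide)) (hx.monotone (by decide))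
  have m7 : (x 25 - x 24) ≤ (x 26 - x 23) := sub_le_sub (hx.monotone (by decide)) (hx.monotone (by decide))
  have m8 : (x 5 - x 4) ≤ (x 17 - x 4) := sub_le_sub (hx.monotone (by decide)) (hx.monotone (by decide))
  have m9 : (x 17 - x 16) ≤ (x 19 - x 3) := sub_le_sub (hx.monotone (by decide)) (hx.monotone (by decide))
  have m10 : (x 18 - x 17) ≤ (x 30 - x 17) := sub_le_sub (hx.monotone (by decide)) (hx.monotone (by decide))
  have m11 : (x 30 - x 29) ≤ (x 33 - x 28) := sub_le_sub (hx.monotone (by decide)) (hx.monotone (by decide))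
  have m12 : (x 10 - x 9) ≤ (x 11 - x 8) := sub_le_sub (hx.monotone (by decide)) (hx.monotone (by decide))
  have m13 : (x 14 - x 13) ≤ (x 14 - x 9) := sub_le_sub (hx.monotone (by decide)) (hx.monotone (by decide))
  have m14 : (x 15 - x 14) ≤ (x 20 - x 2) := sub_le_sub (hx.monotone (by decide)) (hx.monotone (by decide))
  have m15 : (x 32 - x 31) ≤ (x 32 - x 14) := sub_le_sub (hx.monotone (by decide)) (hx.monotone (by decide))
  have m16 : (x 23 - x 22) ≤ (x 24 - x 21) := sub_le_sub (hx.monotone (by decide)) (hx.monotone (by decide))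
  have m17 : (x 27 - x 26) ≤ (x 27 - x 22) := sub_le_sub (hx.monotone (by decide)) (hx.monotone (by decide))
  have m18 : (x 28 - x 27) ≤ (x 29 - x 18) := sub_le_sub (hx.monotone (by decide)) (hx.monotone (by decide))
  have m19 : (x 34 - x 33) ≤ (x 34 - x 27) := sub_le_sub (hx.monotone (by decide)) (hx.monotone (by decide))
  have bp0 : (0:ℝ) < (x 7 - x 0) := d0_7
  have bp1 : (0:ℝ) < (x 7 - x 0) * (x 16 - x 5) := mul_pos bp0 d5_16
  have bp2 : (0:ℝ) < (x 7 - x 0) * (x 16 - x 5) * (x 12 - x 7) := mul_pos bp1 d7_12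
  have bp3 : (0:ℝ) < (x 7 - x 0) * (x 16 - x 5) * (x 12 - x 7) * (x 13 - x 10) := mul_pos bp2 d10_13
  have bp4 : (0:ℝ) < (x 7 - x 0) * (x 16 - x 5) * (x 12 - x 7) * (x 13 - x 10) * (x 6 - x 1) := mul_pos bp3 d1_6
  have bp5 : (0:ℝ) < (x 7 - x 0) * (x 16 - x 5) * (x 12 - x 7) * (x 13 - x 10) * (x 6 - x 1) * (x 31 - x 15) := mul_pos bp4 d15_31
  have bp6 : (0:ℝ) < (x 7 - x 0) * (x 16 - x 5) * (x 12 - x 7) * (x 13 - x 10) * (x 6 - x 1) * (x 31 - x 15) * (x 25 - x 20) := mul_pos bp5 d20_25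
  have bp7 : (0:ℝ) < (x 7 - x 0) * (x 16 - x 5) * (x 12 - x 7) * (x 13 - x 10) * (x 6 - x 1) * (x 31 - x 15) * (x 25 - x 20) * (x 26 - x 23) := mul_pos bp6 d23_26
  have bp8 : (0:ℝ) < (x 7 - x 0) * (x 16 - x 5) * (x 12 - x 7) * (x 13 - x 10) * (x 6 - x 1) * (x 31 - x 15) * (x 25 - x 20) * (x 26 - x 23) * (x 17 - x 4) := mul_pos bp7 d4_17
  have bp9 : (0:ℝ) < (x 7 - x 0) * (x 16 - x 5) * (x 12 - x 7) * (x 13 - x 10) * (x 6 - x 1) * (x 31 - x 15) * (x 25 - x 20) * (x 26 - x 23) * (x 17 - x 4) * (x 19 - x 3) := mul_pos bp8 d3_19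
  have bp10 : (0:ℝ) < (x 7 - x 0) * (x 16 - x 5) * (x 12 - x 7) * (x 13 - x 10) * (x 6 - x 1) * (x 31 - x 15) * (x 25 - x 20) * (x 26 - x 23) * (x 17 - x 4) * (x 19 - x 3) * (x 30 - x 17) := mul_pos bp9 d17_30
  have bp11 : (0:ℝ) < (x 7 - x 0) * (x 16 - x 5) * (x 12 - x 7) * (x 13 - x 10) * (x 6 - x 1) * (x 31 - x 15) * (x 25 - x 20) * (x 26 - x 23) * (x 17 - x 4) * (x 19 - x 3) * (x 30 - x 17) * (x 33 - x 28) := mul_pos bp10 d28_33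
  have bp12 : (0:ℝ) < (x 7 - x 0) * (x 16 - x 5) * (x 12 - x 7) * (x 13 - x 10) * (x 6 - x 1) * (x 31 - x 15) * (x 25 - x 20) * (x 26 - x 23) * (x 17 - x 4) * (x 19 - x 3) * (x 30 - x 17) * (x 33 - x 28) * (x 11 - x 8) := mul_pos bp11 d8_11
  have bp13 : (0:ℝ) < (x 7 - x 0) * (x 16 - x 5) * (x 12 - x 7) * (x 13 - x 10) * (x 6 - x 1) * (x 31 - x 15) * (x 25 - x 20) * (x 26 - x 23) * (x 17 - x 4) * (x 19 - x 3) * (x 30 - x 17) * (x 33 - x 28) * (x 11 - x 8) * (x 14 - x 9) := mul_pos bp12 d9_14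
  have bp14 : (0:ℝ) < (x 7 - x 0) * (x 16 - x 5) * (x 12 - x 7) * (x 13 - x 10) * (x 6 - x 1) * (x 31 - x 15) * (x 25 - x 20) * (x 26 - x 23) * (x 17 - x 4) * (x 19 - x 3) * (x 30 - x 17) * (x 33 - x 28) * (x 11 - x 8) * (x 14 - x 9) * (x 20 - x 2) := mul_pos bp13 d2_20
  have bp15 : (0:ℝ) < (x 7 - x 0) * (x 16 - x 5) * (x 12 - x 7) * (x 13 - x 10) * (x 6 - x 1) * (x 31 - x 15) * (x 25 - x 20) * (x 26 - x 23) * (x 17 - x 4) * (x 19 - x 3) * (x 30 - x 17) * (x 33 - x 28) * (x 11 - x 8) * (x 14 - x 9) * (x 20 - x 2) * (x 32 - x 14) := mul_pos bp14 d14_32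
  have bp16 : (0:ℝ) < (x 7 - x 0) * (x 16 - x 5) * (x 12 - x 7) * (x 13 - x 10) * (x 6 - x 1) * (x 31 - x 15) * (x 25 - x 20) * (x 26 - x 23) * (x 17 - x 4) * (x 19 - x 3) * (x 30 - x 17) * (x 33 - x 28) * (x 11 - x 8) * (x 14 - x 9) * (x 20 - x 2) * (x 32 - x 14) * (x 24 - x 21) := mul_pos bp15 d21_24
  have bp17 : (0:ℝ) < (x 7 - x 0) * (x 16 - x 5) * (x 12 - x 7) * (x 13 - x 10) * (x 6 - x 1) * (x 31 - x 15) * (x 25 - x 20) * (x 26 - x 23) * (x 17 - x 4) * (x 19 - x 3) * (x 30 - x 17) * (x 33 - x 28) * (x 11 - x 8) * (x 14 - x 9) * (x 20 - x 2) * (x 32 - x 14) * (x 24 - x 21) * (x 27 - x 22) := mul_pos bp16 d22_27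
  have bp18 : (0:ℝ) < (x 7 - x 0) * (x 16 - x 5) * (x 12 - x 7) * (x 13 - x 10) * (x 6 - x 1) * (x 31 - x 15) * (x 25 - x 20) * (x 26 - x 23) * (x 17 - x 4) * (x 19 - x 3) * (x 30 - x 17) * (x 33 - x 28) * (x 11 - x 8) * (x 14 - x 9) * (x 20 - x 2) * (x 32 - x 14) * (x 24 - x 21) * (x 27 - x 22) * (x 29 - x 18) := mul_pos bp17 d18_29
  have bp19 : (0:ℝ) < (x 7 - x 0) * (x 16 - x 5) * (x 12 - x 7) * (x 13 - x 10) * (x 6 - x 1) * (x 31 - x 15) * (x 25 - x 20) * (x 26 - x 23) * (x 17 - x 4) * (x 19 - x 3) * (x 30 - x 17) * (x 33 - x 28) * (x 11 - x 8) * (x 14 - x 9) * (x 20 - x 2) * (x 32 - x 14) * (x 24 - x 21) * (x 27 - x 22) * (x 29 - x 18) * (x 34 - x 27) := mul_pos bp18 d27_34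
  have f0 : (x 1 - x 0) ≤ (x 7 - x 0) := m0
  have f1 : (x 1 - x 0) * (x 7 - x 6) ≤ (x 7 - x 0) * (x 16 - x 5) := mul_le_mul f0 m1 d6_7.le bp0.le
  have f2 : (x 1 - x 0) * (x 7 - x 6) * (x 8 - x 7) ≤ (x 7 - x 0) * (x 16 - x 5) * (x 12 - x 7) := mul_le_mul f1 m2 d7_8.le bp1.le
  have f3 : (x 1 - x 0) * (x 7 - x 6) * (x 8 - x 7) * (x 12 - x 11) ≤ (x 7 - x 0) * (x 16 - x 5) * (x 12 - x 7) * (x 13 - x 10) := mul_le_mul f2 m3 d11_12.le bp2.le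
  have f4 : (x 1 - x 0) * (x 7 - x 6) * (x 8 - x 7) * (x 12 - x 11) * (x 3 - x 2) ≤ (x 7 - x 0) * (x 16 - x 5) * (x 12 - x 7) * (x 13 - x 10) * (x 6 - x 1) := mul_le_mul f3 m4 d2_3.le bp3.le
  have f5 : (x 1 - x 0) * (x 7 - x 6) * (x 8 - x 7) * (x 12 - x 11) * (x 3 - x 2) * (x 20 - x 19) ≤ (x 7 - x 0) * (x 16 - x 5) * (x 12 - x 7) * (x 13 - x 10) * (x 6 - x 1) * (x 31 - x 15) := mul_le_mul f4 m5 d19_20.le bp4.le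
  have f6 : (x 1 - x 0) * (x 7 - x 6) * (x 8 - x 7) * (x 12 - x 11) * (x 3 - x 2) * (x 20 - x 19) * (x 21 - x 20) ≤ (x 7 - x 0) * (x 16 - x 5) * (x 12 - x 7) * (x 13 - x 10) * (x 6 - x 1) * (x 31 - x 15) * (x 25 - x 20) := mul_le_mul f5 m6 d20_21.le bp5.le
  have f7 : (x 1 - x 0) * (x 7 - x 6) * (x 8 - x 7) * (x 12 - x 11) * (x 3 - x 2) * (x 20 - x 19) * (x 21 - x 20) * (x 25 - x 24) ≤ (x 7 - x 0) * (x 16 - x 5) * (x 12 - x 7) * (x 13 - x 10) * (x 6 - x 1) * (x 31 - x 15) * (x 25 - x 20) * (x 26 - x 23) := mul_le_mul f6 m7 d24_25.le bp6.le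
  have f8 : (x 1 - x 0) * (x 7 - x 6) * (x 8 - x 7) * (x 12 - x 11) * (x 3 - x 2) * (x 20 - x 19) * (x 21 - x 20) * (x 25 - x 24) * (x 5 - x 4) ≤ (x 7 - x 0) * (x 16 - x 5) * (x 12 - x 7) * (x 13 - x 10) * (x 6 - x 1) * (x 31 - x 15) * (x 25 - x 20) * (x 26 - x 23) * (x 17 - x 4) := mul_le_mul f7 m8 d4_5.le bp7.le
  have f9 : (x 1 - x 0) * (x 7 - x 6) * (x 8 - x 7) * (x 12 - x 11) * (x 3 - x 2) * (x 20 - x 19) * (x 21 - x 20) * (x 25 - x 24) * (x 5 - x 4) * (x 17 - x 16) ≤ (x 7 - x 0) * (x 16 - x 5) * (x 12 - x 7) * (x 13 - x 10) * (x 6 - x 1) * (x 31 - x 15) * (x 25 - x 20) * (x 26 - x 23) * (x 17 - x 4) * (x 19 - x 3) := mul_le_mul f8 m9 d16_17.le bp8.le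
  have f10 : (x 1 - x 0) * (x 7 - x 6) * (x 8 - x 7) * (x 12 - x 11) * (x 3 - x 2) * (x 20 - x 19) * (x 21 - x 20) * (x 25 - x 24) * (x 5 - x 4) * (x 17 - x 16) * (x 18 - x 17) ≤ (x 7 - x 0) * (x 16 - x 5) * (x 12 - x 7) * (x 13 - x 10) * (x 6 - x 1) * (x 31 - x 15) * (x 25 - x 20) * (x 26 - x 23) * (x 17 - x 4) * (x 19 - x 3) * (x 30 - x 17) := mul_le_mul f9 m10 d17_18.le bp9.le
  have f11 : (x 1 - x 0) * (x 7 - x 6) * (x 8 - x 7) * (x 12 - x 11) * (x 3 - x 2) * (x 20 - x 19) * (x 21 - x 20) * (x 25 - x 24) * (x 5 - x 4) * (x 17 - x 16) * (x 18 - x 17) * (x 30 - x 29) ≤ (x 7 - x 0) * (x 16 - x 5) * (x 12 - x 7) * (x 13 - x 10) * (x 6 - x 1) * (x 31 - x 15) * (x 25 - x 20) * (x 26 - x 23) * (x 17 - x 4) * (x 19 - x 3) * (x 30 - x 17) * (x 33 - x 28) := mul_le_mul f10 m11 d29_30.le bp10.le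
  have f12 : (x 1 - x 0) * (x 7 - x 6) * (x 8 - x 7) * (x 12 - x 11) * (x 3 - x 2) * (x 20 - x 19) * (x 21 - x 20) * (x 25 - x 24) * (x 5 - x 4) * (x 17 - x 16) * (x 18 - x 17) * (x 30 - x 29) * (x 10 - x 9) ≤ (x 7 - x 0) * (x 16 - x 5) * (x 12 - x 7) * (x 13 - x 10) * (x 6 - x 1) * (x 31 - x 15) * (x 25 - x 20) * (x 26 - x 23) * (x 17 - x 4) * (x 19 - x 3) * (x 30 - x 17) * (x 33 - x 28) * (x 11 - x 8) := mul_le_mul f11 m12 d9_10.le bp11.le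
  have f13 : (x 1 - x 0) * (x 7 - x 6) * (x 8 - x 7) * (x 12 - x 11) * (x 3 - x 2) * (x 20 - x 19) * (x 21 - x 20) * (x 25 - x 24) * (x 5 - x 4) * (x 17 - x 16) * (x 18 - x 17) * (x 30 - x 29) * (x 10 - x 9) * (x 14 - x 13) ≤ (x 7 - x 0) * (x 16 - x 5) * (x 12 - x 7) * (x 13 - x 10) * (x 6 - x 1) * (x 31 - x 15) * (x 25 - x 20) * (x 26 - x 23) * (x 17 - x 4) * (x 19 - x 3) * (x 30 - x 17) * (x 33 - x 28) * (x 11 - x 8) * (x 14 - x 9) := mul_le_mul f12 m13 d13_14.le bp12.le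
  have f14 : (x 1 - x 0) * (x 7 - x 6) * (x 8 - x 7) * (x 12 - x 11) * (x 3 - x 2) * (x 20 - x 19) * (x 21 - x 20) * (x 25 - x 24) * (x 5 - x 4) * (x 17 - x 16) * (x 18 - x 17) * (x 30 - x 29) * (x 10 - x 9) * (x 14 - x 13) * (x 15 - x 14) ≤ (x 7 - x 0) * (x 16 - x 5) * (x 12 - x 7) * (x 13 - x 10) * (x 6 - x 1) * (x 31 - x 15) * (x 25 - x 20) * (x 26 - x 23) * (x 17 - x 4) * (x 19 - x 3) * (x 30 - x 17) * (x 33 - x 28) * (x 11 - x 8) * (x 14 - x 9) * (x 20 - x 2) := mul_le_mul f13 m14 d14_15.le bp13.le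
  have f15 : (x 1 - x 0) * (x 7 - x 6) * (x 8 - x 7) * (x 12 - x 11) * (x 3 - x 2) * (x 20 - x 19) * (x 21 - x 20) * (x 25 - x 24) * (x 5 - x 4) * (x 17 - x 16) * (x 18 - x 17) * (x 30 - x 29) * (x 10 - x 9) * (x 14 - x 13) * (x 15 - x 14) * (x 32 - x 31) ≤ (x 7 - x 0) * (x 16 - x 5) * (x 12 - x 7) * (x 13 - x 10) * (x 6 - x 1) * (x 31 - x 15) * (x 25 - x 20) * (x 26 - x 23) * (x 17 - x 4) * (x 19 - x 3) * (x 30 - x 17) * (x 33 - x 28) * (x 11 - x 8) * (x 14 - x 9) * (x 20 - x 2) * (x 32 - x 14) := mul_le_mul f14 m15 d31_32.le bp14.le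
  have f16 : (x 1 - x 0) * (x 7 - x 6) * (x 8 - x 7) * (x 12 - x 11) * (x 3 - x 2) * (x 20 - x 19) * (x 21 - x 20) * (x 25 - x 24) * (x 5 - x 4) * (x 17 - x 16) * (x 18 - x 17) * (x 30 - x 29) * (x 10 - x 9) * (x 14 - x 13) * (x 15 - x 14) * (x 32 - x 31) * (x 23 - x 22) ≤ (x 7 - x 0) * (x 16 - x 5) * (x 12 - x 7) * (x 13 - x 10) * (x 6 - x 1) * (x 31 - x 15) * (x 25 - x 20) * (x 26 - x 23) * (x 17 - x 4) * (x 19 - x 3) * (x 30 - x 17) * (x 33 - x 28) * (x 11 - x 8) * (x 14 - x 9) * (x 20 - x 2) * (x 32 - x 14) * (x 24 - x 21) := mul_le_mul f15 m16 d22_23.le bp15.le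
  have f17 : (x 1 - x 0) * (x 7 - x 6) * (x 8 - x 7) * (x 12 - x 11) * (x 3 - x 2) * (x 20 - x 19) * (x 21 - x 20) * (x 25 - x 24) * (x 5 - x 4) * (x 17 - x 16) * (x 18 - x 17) * (x 30 - x 29) * (x 10 - x 9) * (x 14 - x 13) * (x 15 - x 14) * (x 32 - x 31) * (x 23 - x 22) * (x 27 - x 26) ≤ (x 7 - x 0) * (x 16 - x 5) * (x 12 - x 7) * (x 13 - x 10) * (x 6 - x 1) * (x 31 - x 15) * (x 25 - x 20) * (x 26 - x 23) * (x 17 - x 4) * (x 19 - x 3) * (x 30 - x 17) * (x 33 - x 28) * (x 11 - x 8) * (x 14 - x 9) * (x 20 - x 2) * (x 32 - x 14) * (x 24 - x 21) * (x 27 - x 22) := mul_le_mul f16 m17 d26_27.le bp16.le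
  have f18 : (x 1 - x 0) * (x 7 - x 6) * (x 8 - x 7) * (x 12 - x 11) * (x 3 - x 2) * (x 20 - x 19) * (x 21 - x 20) * (x 25 - x 24) * (x 5 - x 4) * (x 17 - x 16) * (x 18 - x 17) * (x 30 - x 29) * (x 10 - x 9) * (x 14 - x 13) * (x 15 - x 14) * (x 32 - x 31) * (x 23 - x 22) * (x 27 - x 26) * (x 28 - x 27) ≤ (x 7 - x 0) * (x 16 - x 5) * (x 12 - x 7) * (x 13 - x 10) * (x 6 - x 1) * (x 31 - x 15) * (x 25 - x 20) * (x 26 - x 23) * (x 17 - x 4) * (x 19 - x 3) * (x 30 - x 17) * (x 33 - x 28) * (x 11 - x 8) * (x 14 - x 9) * (x 20 - x 2) * (x 32 - x 14) * (x 24 - x 21) * (x 27 - x 22) * (x 29 - x 18) := mul_le_mul f17 m18 d27_28.le bp17.le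
  have f19 : (x 1 - x 0) * (x 7 - x 6) * (x 8 - x 7) * (x 12 - x 11) * (x 3 - x 2) * (x 20 - x 19) * (x 21 - x 20) * (x 25 - x 24) * (x 5 - x 4) * (x 17 - x 16) * (x 18 - x 17) * (x 30 - x 29) * (x 10 - x 9) * (x 14 - x 13) * (x 15 - x 14) * (x 32 - x 31) * (x 23 - x 22) * (x 27 - x 26) * (x 28 - x 27) * (x 34 - x 33) ≤ (x 7 - x 0) * (x 16 - x 5) * (x 12 - x 7) * (x 13 - x 10) * (x 6 - x 1) * (x 31 - x 15) * (x 25 - x 20) * (x 26 - x 23) * (x 17 - x 4) * (x 19 - x 3) * (x 30 - x 17) * (x 33 - x 28) * (x 11 - x 8) * (x 14 - x 9) * (x 20 - x 2) * (x 32 - x 14) * (x 24 - x 21) * (x 27 - x 22) * (x 29 - x 18) * (x 34 - x 27) := mul_le_mul f18 m19 d33_34.le bp18.le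
  have e1 : ((x 1 - x 0) * (x 7 - x 6) * (x 8 - x 7) * (x 12 - x 11)) * ((x 3 - x 2) * (x 20 - x 19) * (x 21 - x 20) * (x 25 - x 24)) * ((x 5 - x 4) * (x 17 - x 16) * (x 18 - x 17) * (x 30 - x 29)) * ((x 10 - x 9) * (x 14 - x 13) * (x 15 - x 14) * (x 32 - x 31)) * ((x 23 - x 22) * (x 27 - x 26) * (x 28 - x 27) * (x 34 - x 33)) = (x 1 - x 0) * (x 7 - x 6) * (x 8 - x 7) * (x 12 - x 11) * (x 3 - x 2) * (x 20 - x 19) * (x 21 - x 20) * (x 25 - x 24) * (x 5 - x 4) * (x 17 - x 16) * (x 18 - x 17) * (x 30 - x 29) * (x 10 - x 9) * (x 14 - x 13) * (x 15 - x 14) * (x 32 - x 31) * (x 23 - x 22) * (x 27 - x 26) * (x 28 - x 27) * (x 34 - x 33) := by ac_rfl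
  have e2 : ((x 6 - x 1) * (x 11 - x 8) * (x 7 - x 0) * (x 12 - x 7)) * ((x 19 - x 3) * (x 24 - x 21) * (x 20 - x 2) * (x 25 - x 20)) * ((x 16 - x 5) * (x 29 - x 18) * (x 17 - x 4) * (x 30 - x 17)) * ((x 13 - x 10) * (x 31 - x 15) * (x 14 - x 9) * (x 32 - x 14)) * ((x 26 - x 23) * (x 33 - x 28) * (x 27 - x 22) * (x 34 - x 27)) = (x 7 - x 0) * (x 16 - x 5) * (x 12 - x 7) * (x 13 - x 10) * (x 6 - x 1) * (x 31 - x 15) * (x 25 - x 20) * (x 26 - x 23) * (x 17 - x 4) * (x 19 - x 3) * (x 30 - x 17) * (x 33 - x 28) * (x 11 - x 8) * (x 14 - x 9) * (x 20 - x 2) * (x 32 - x 14) * (x 24 - x 21) * (x 27 - x 22) * (x 29 - x 18) * (x 34 - x 27) := by ac_rfl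
  have hfin : ((x 1 - x 0) * (x 7 - x 6) * (x 8 - x 7) * (x 12 - x 11)) * ((x 3 - x 2) * (x 20 - x 19) * (x 21 - x 20) * (x 25 - x 24)) * ((x 5 - x 4) * (x 17 - x 16) * (x 18 - x 17) * (x 30 - x 29)) * ((x 10 - x 9) * (x 14 - x 13) * (x 15 - x 14) * (x 32 - x 31)) * ((x 23 - x 22) * (x 27 - x 26) * (x 28 - x 27) * (x 34 - x 33)) ≤ ((x 6 - x 1) * (x 11 - x 8) * (x 7 - x 0) * (x 12 - x 7)) * ((x 19 - x 3) * (x 24 - x 21) * (x 20 - x 2) * (x 25 - x 20)) * ((x 16 - x 5) * (x 29 - x 18) * (x 17 - x 4) * (x 30 - x 17)) * ((x 13 - x 10) * (x 31 - x 15) * (x 14 - x 9) * (x 32 - x 14)) * ((x 26 - x 23) * (x 33 - x 28) * (x 27 - x 22) * (x 34 - x 27)) := by rw [e1, e2]; exact f19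
  exact absurd hlt (not_lt.mpr hfin)
end

section
/- Set x_i = i for i = 0, 1, 2, 3, 4, 5, and let x_6 be any real number with x_6 > 5. Then d_{0,1}·d_{2,3}·d_{3,4}·d_{5,6} < d_{1,2}·d_{4,5}·d_{0,3}·d_{3,6} (where d_{i,j} = x_j − x_i); consequently there exist no real numbers y_0, …, y_6 such that the terrain with points p_i = (x_i, y_i) has visibility graph exactly G'. -/
theorem Gp_not_extendable_from_integer_prefix (x : Fin 7 → ℝ)
    (h0 : x 0 = 0) (h1 : x 1 = 1) (h2 : x 2 = 2) (h3 : x 3 = 3)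
    (h4 : x 4 = 4) (h5 : x 5 = 5) (h6 : 5 < x 6) :
    (x 1 - x 0) * (x 3 - x 2) * (x 4 - x 3) * (x 6 - x 5) <
      (x 2 - x 1) * (x 5 - x 4) * (x 3 - x 0) * (x 6 - x 3) ∧
    ¬ ∃ y : Fin 7 → ℝ, ∀ i k : Fin 7, i < k → (Sees x y i k ↔ GpEdge (i : ℕ) (k : ℕ)) := by
  constructor
  · rw [h0, h1, h2, h3, h4, h5]; nlinarith [h6]
  rintro ⟨y, hy⟩
  -- Facts from edges
  have hE034 : (0:ℝ) < y 0 - 4 * y 3 + 3 * y 4 := by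
    have hS : Sees x y 0 4 := (hy 0 4 (by decide)).mpr (by unfold GpEdge; decide)
    rcases hS with h | h
    · exact absurd h (by decide)
    · have hb := h 3 (by decide) (by decide)
      simp only [StrictlyBelow] at hb
      rw [h0, h3, h4] at hb; linarith
  have hE123 : (0:ℝ) < y 1 - 2 * y 2 + y 3 := by
    have hS : Sees x y 1 3 := (hy 1 3 (by decide)).mpr (by unfold GpEdge; decide)
    rcases hS with h | h
    · exact absurd h (by decide)
    · have hb := h 2 (by decide) (by decide)
      simp only [StrictlyBelow] at hb
      rw [h1, h2, h3] at hb; linarith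
  have hE236 : (0:ℝ) < (x 6 - 3) * y 2 - (x 6 - 2) * y 3 + y 6 := by
    have hS : Sees x y 2 6 := (hy 2 6 (by decide)).mpr (by unfold GpEdge; decide)
    rcases hS with h | h
    · exact absurd h (by decide)
    · have hb := h 3 (by decide) (by decide)
      simp only [StrictlyBelow] at hb
      rw [h2, h3] at hb; linarith
  -- Blockers from non-edges
  have hN : ∀ i k : Fin 7, i < k → ¬ GpEdge (i : ℕ) (k : ℕ) → ∃ j : Fin 7, i < j ∧ j < k ∧
      (x k - x j) * y i - (x k - x i) * y j + (x j - x i) * y k ≤ 0 := by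
    intro i k hik hne
    have hs : ¬ Sees x y i k := fun hs => hne ((hy i k hik).mp hs)
    simp only [Sees, StrictlyBelow] at hs
    push_neg at hs
    exact hs.2
  have hN012 : y 0 - 2 * y 1 + y 2 ≤ 0 := by
    obtain ⟨j, hj1, hj2, hb⟩ := hN 0 2 (by decide) (by unfold GpEdge; decide)
    have hj : j = 1 := by omega
    subst hj; rw [h0, h1, h2] at hb; linarith
  have hN456 : (x 6 - 5) * y 4 - (x 6 - 4) * y 5 + y 6 ≤ 0 := by
    obtain ⟨j, hj1, hj2, hb⟩ := hN 4 6 (by decide) (by unfold GpEdge; decide)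
    have hj : j = 5 := by omega
    subst hj; rw [h4, h5] at hb; linarith
  have hN14 : 2 * y 1 - 3 * y 2 + y 4 ≤ 0 ∨ y 1 - 3 * y 3 + 2 * y 4 ≤ 0 := by
    obtain ⟨j, hj1, hj2, hb⟩ := hN 1 4 (by decide) (by unfold GpEdge; decide)
    rcases (by omega : j = 2 ∨ j = 3) with hj | hj
    · left; subst hj; rw [h1, h2, h4] at hb; linarith
    · right; subst hj; rw [h1, h3, h4] at hb; linarith
  have hN15 : 3 * y 1 - 4 * y 2 + y 5 ≤ 0 ∨ 2 * y 1 - 4 * y 3 + 2 * y 5 ≤ 0 ∨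
      y 1 - 4 * y 4 + 3 * y 5 ≤ 0 := by
    obtain ⟨j, hj1, hj2, hb⟩ := hN 1 5 (by decide) (by unfold GpEdge; decide)
    rcases (by omega : j = 2 ∨ j = 3 ∨ j = 4) with hj | hj | hj
    · left; subst hj; rw [h1, h2, h5] at hb; linarith
    · right; left; subst hj; rw [h1, h3, h5] at hb; linarith
    · right; right; subst hj; rw [h1, h4, h5] at hb; linarith
  -- Derive the contradiction
  set t := x 6 with ht
  rcases hN14 with hA | hN134
  · -- blocker 2 of {1,4}: t-free certificate 1*E034 + 4*E123 + 1*N012 + 3*N124 = 0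
    linarith
  · -- blocker 3 of {1,4}; case on blocker of {1,5}
    have c1 : (0:ℝ) ≤ t - 4 := by linarith
    rcases hN15 with hB | hB | hB
    · -- N125 : (5t-19)E034 + E236 + (5t-19)N012 + N456 + (7t-26)N134 + (t-4)N125 = 0
      have q1 : (0:ℝ) < (5*t - 19) * (y 0 - 4 * y 3 + 3 * y 4) :=
        mul_pos (by linarith) hE034
      have q3 : (0:ℝ) ≤ (5*t - 19) * (-(y 0 - 2 * y 1 + y 2)) :=
        mul_nonneg (by linarith) (by linarith)
      have q5 : (0:ℝ) ≤ (7*t - 26) * (-(y 1 - 3 * y 3 + 2 * y 4)) :=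
        mul_nonneg (by linarith) (by linarith)
      have q6 : (0:ℝ) ≤ (t - 4) * (-(3 * y 1 - 4 * y 2 + y 5)) :=
        mul_nonneg c1 (by linarith)
      linarith [q1, q3, q5, q6, hE236, hN456]
    · -- N135 : 2(t-3)E034 + 2E236 + 2(t-3)N012 + 2N456 + 2(t-2)N134 + (t-4)N135 = 0
      have q1 : (0:ℝ) < (2*t - 6) * (y 0 - 4 * y 3 + 3 * y 4) :=
        mul_pos (by linarith) hE034
      have q3 : (0:ℝ) ≤ (2*t - 6) * (-(y 0 - 2 * y 1 + y 2)) :=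
        mul_nonneg (by linarith) (by linarith)
      have q5 : (0:ℝ) ≤ (2*t - 4) * (-(y 1 - 3 * y 3 + 2 * y 4)) :=
        mul_nonneg (by linarith) (by linarith)
      have q6 : (0:ℝ) ≤ (t - 4) * (-(2 * y 1 - 4 * y 3 + 2 * y 5)) :=
        mul_nonneg c1 (by linarith)
      linarith [q1, q3, q5, q6, hE236, hN456]
    · -- N145 : 3(t-3)E034 + 3E236 + 3(t-3)N012 + 3N456 + (5t-14)N134 + (t-4)N145 = 0
      have q1 : (0:ℝ) < (3*t - 9) * (y 0 - 4 * y 3 + 3 * y 4) :=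
        mul_pos (by linarith) hE034
      have q3 : (0:ℝ) ≤ (3*t - 9) * (-(y 0 - 2 * y 1 + y 2)) :=
        mul_nonneg (by linarith) (by linarith)
      have q5 : (0:ℝ) ≤ (5*t - 14) * (-(y 1 - 3 * y 3 + 2 * y 4)) :=
        mul_nonneg (by linarith) (by linarith)
      have q6 : (0:ℝ) ≤ (t - 4) * (-(y 1 - 4 * y 4 + 3 * y 5)) :=
        mul_nonneg c1 (by linarith)
      linarith [q1, q3, q5, q6, hE236, hN456]
end

section
/- For any real c > 0, set x_i = i·c for i = 0, 1, …, 6 (equally spaced x-coordinates). Then d_{0,1}·d_{2,3}·d_{3,4}·d_{5,6} < d_{1,2}·d_{4,5}·d_{0,3}·d_{3,6} (where d_{i,j} = x_j − x_i); consequently there exist no real numbers y_0, …, y_6 such that the terrain with points p_i = (x_i, y_i) has visibility graph exactly G'. In other words, G' cannot be realized as the visibility graph of a terrain with uniform step lengths. -/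
set_option maxHeartbeats 1000000 in
theorem Gp_not_uniform_steps (c : ℝ) (hc : 0 < c) (x : Fin 7 → ℝ)
    (hx : ∀ i : Fin 7, x i = (i : ℕ) * c) :
    (x 1 - x 0) * (x 3 - x 2) * (x 4 - x 3) * (x 6 - x 5) <
      (x 2 - x 1) * (x 5 - x 4) * (x 3 - x 0) * (x 6 - x 3) ∧
    ¬ ∃ y : Fin 7 → ℝ, ∀ i k : Fin 7, i < k → (Sees x y i k ↔ GpEdge (i : ℕ) (k : ℕ)) := by
  have e0 : x 0 = 0 * c := by rw [hx 0]; norm_num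
  have e1 : x 1 = 1 * c := by rw [hx 1]; norm_num
  have e2 : x 2 = 2 * c := by
    rw [hx 2, show ((2 : Fin 7) : ℕ) = 2 from rfl]; norm_num
  have e3 : x 3 = 3 * c := by
    rw [hx 3, show ((3 : Fin 7) : ℕ) = 3 from rfl]; norm_num
  have e4 : x 4 = 4 * c := by
    rw [hx 4, show ((4 : Fin 7) : ℕ) = 4 from rfl]; norm_num
  have e5 : x 5 = 5 * c := by
    rw [hx 5, show ((5 : Fin 7) : ℕ) = 5 from rfl]; norm_num
  have e6 : x 6 = 6 * c := by
    rw [hx 6, show ((6 : Fin 7) : ℕ) = 6 from rfl]; norm_num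
  constructor
  · rw [e0, e1, e2, e3, e4, e5, e6]
    have h4 : 0 < c * c * c * c := by positivity
    nlinarith [h4]
  rintro ⟨y, h⟩
  have sees04 : Sees x y 0 4 := (h 0 4 (by decide)).mpr (by unfold GpEdge; decide)
  have sees05 : Sees x y 0 5 := (h 0 5 (by decide)).mpr (by unfold GpEdge; decide)
  have sees16 : Sees x y 1 6 := (h 1 6 (by decide)).mpr (by unfold GpEdge; decide)
  have sees26 : Sees x y 2 6 := (h 2 6 (by decide)).mpr (by unfold GpEdge; decide)
  have B014 : StrictlyBelow x y 0 1 4 := by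
    rcases sees04 with h' | h'
    · exact absurd h' (by decide)
    · exact h' 1 (by decide) (by decide)
  have B015 : StrictlyBelow x y 0 1 5 := by
    rcases sees05 with h' | h'
    · exact absurd h' (by decide)
    · exact h' 1 (by decide) (by decide)
  have B146 : StrictlyBelow x y 1 4 6 := by
    rcases sees16 with h' | h'
    · exact absurd h' (by decide)
    · exact h' 4 (by decide) (by decide)
  have B236 : StrictlyBelow x y 2 3 6 := by
    rcases sees26 with h' | h'
    · exact absurd h' (by decide)
    · exact h' 3 (by decide) (by decide)
  have B246 : StrictlyBelow x y 2 4 6 := by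
    rcases sees26 with h' | h'
    · exact absurd h' (by decide)
    · exact h' 4 (by decide) (by decide)
  have b014 : 0 < 3 * y 0 - 4 * y 1 + y 4 := by
    simp only [StrictlyBelow, e0, e1, e4] at B014
    have hm : c * 0 < c * (3 * y 0 - 4 * y 1 + y 4) := by linarith [B014]
    linarith [(mul_lt_mul_iff_right₀ hc).mp hm]
  have b015 : 0 < 4 * y 0 - 5 * y 1 + y 5 := by
    simp only [StrictlyBelow, e0, e1, e5] at B015
    have hm : c * 0 < c * (4 * y 0 - 5 * y 1 + y 5) := by linarith [B015]
    linarith [(mul_lt_mul_iff_right₀ hc).mp hm]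
  have b146 : 0 < 2 * y 1 - 5 * y 4 + 3 * y 6 := by
    simp only [StrictlyBelow, e1, e4, e6] at B146
    have hm : c * 0 < c * (2 * y 1 - 5 * y 4 + 3 * y 6) := by linarith [B146]
    linarith [(mul_lt_mul_iff_right₀ hc).mp hm]
  have b236 : 0 < 3 * y 2 - 4 * y 3 + y 6 := by
    simp only [StrictlyBelow, e2, e3, e6] at B236
    have hm : c * 0 < c * (3 * y 2 - 4 * y 3 + y 6) := by linarith [B236]
    linarith [(mul_lt_mul_iff_right₀ hc).mp hm]
  have b246 : 0 < 2 * y 2 - 4 * y 4 + 2 * y 6 := by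
    simp only [StrictlyBelow, e2, e4, e6] at B246
    have hm : c * 0 < c * (2 * y 2 - 4 * y 4 + 2 * y 6) := by linarith [B246]
    linarith [(mul_lt_mul_iff_right₀ hc).mp hm]
  have ns02 : ¬ Sees x y 0 2 :=
    fun hs => absurd ((h 0 2 (by decide)).mp hs) (by unfold GpEdge; decide)
  have ns46 : ¬ Sees x y 4 6 :=
    fun hs => absurd ((h 4 6 (by decide)).mp hs) (by unfold GpEdge; decide)
  have ns14 : ¬ Sees x y 1 4 :=
    fun hs => absurd ((h 1 4 (by decide)).mp hs) (by unfold GpEdge; decide)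
  have ns15 : ¬ Sees x y 1 5 :=
    fun hs => absurd ((h 1 5 (by decide)).mp hs) (by unfold GpEdge; decide)
  have ns25 : ¬ Sees x y 2 5 :=
    fun hs => absurd ((h 2 5 (by decide)).mp hs) (by unfold GpEdge; decide)
  have a012 : y 0 - 2 * y 1 + y 2 ≤ 0 := by
    rw [Sees] at ns02; push_neg at ns02
    obtain ⟨-, j, hj1, hj2, hnb⟩ := ns02
    have hv1 : 0 < (j : ℕ) := hj1
    have hv2 : (j : ℕ) < 2 := hj2
    have hjv : j = 1 := Fin.ext (by exact (by omega : (j : ℕ) = 1))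
    subst hjv
    simp only [StrictlyBelow, e0, e1, e2, not_lt] at hnb
    have hm : c * (y 0 - 2 * y 1 + y 2) ≤ c * 0 := by linarith [hnb]
    linarith [(mul_le_mul_iff_right₀ hc).mp hm]
  have a456 : y 4 - 2 * y 5 + y 6 ≤ 0 := by
    rw [Sees] at ns46; push_neg at ns46
    obtain ⟨-, j, hj1, hj2, hnb⟩ := ns46
    have hv1 : 4 < (j : ℕ) := hj1
    have hv2 : (j : ℕ) < 6 := hj2
    have hjv : j = 5 := Fin.ext (by exact (by omega : (j : ℕ) = 5))
    subst hjv
    simp only [StrictlyBelow, e4, e5, e6, not_lt] at hnb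
    have hm : c * (y 4 - 2 * y 5 + y 6) ≤ c * 0 := by linarith [hnb]
    linarith [(mul_le_mul_iff_right₀ hc).mp hm]
  have h14 : 2 * y 1 - 3 * y 2 + y 4 ≤ 0 ∨ y 1 - 3 * y 3 + 2 * y 4 ≤ 0 := by
    rw [Sees] at ns14; push_neg at ns14
    obtain ⟨-, j, hj1, hj2, hnb⟩ := ns14
    have hv1 : 1 < (j : ℕ) := hj1
    have hv2 : (j : ℕ) < 4 := hj2
    have hjv : j = 2 ∨ j = 3 := by
      rcases Nat.lt_or_ge (j : ℕ) 3 with hl | hl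
      · exact Or.inl (Fin.ext (by exact (by omega : (j : ℕ) = 2)))
      · exact Or.inr (Fin.ext (by exact (by omega : (j : ℕ) = 3)))
    rcases hjv with rfl | rfl
    · left
      simp only [StrictlyBelow, e1, e2, e4, not_lt] at hnb
      have hm : c * (2 * y 1 - 3 * y 2 + y 4) ≤ c * 0 := by linarith [hnb]
      linarith [(mul_le_mul_iff_right₀ hc).mp hm]
    · right
      simp only [StrictlyBelow, e1, e3, e4, not_lt] at hnb
      have hm : c * (y 1 - 3 * y 3 + 2 * y 4) ≤ c * 0 := by linarith [hnb]
      linarith [(mul_le_mul_iff_right₀ hc).mp hm]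
  have h15 : 3 * y 1 - 4 * y 2 + y 5 ≤ 0 ∨ 2 * y 1 - 4 * y 3 + 2 * y 5 ≤ 0 ∨ y 1 - 4 * y 4 + 3 * y 5 ≤ 0 := by
    rw [Sees] at ns15; push_neg at ns15
    obtain ⟨-, j, hj1, hj2, hnb⟩ := ns15
    have hv1 : 1 < (j : ℕ) := hj1
    have hv2 : (j : ℕ) < 5 := hj2
    have hjv : j = 2 ∨ j = 3 ∨ j = 4 := by
      rcases Nat.lt_or_ge (j : ℕ) 3 with hl | hl
      · exact Or.inl (Fin.ext (by exact (by omega : (j : ℕ) = 2)))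
      rcases Nat.lt_or_ge (j : ℕ) 4 with hl2 | hl2
      · exact Or.inr (Or.inl (Fin.ext (by exact (by omega : (j : ℕ) = 3))))
      · exact Or.inr (Or.inr (Fin.ext (by exact (by omega : (j : ℕ) = 4))))
    rcases hjv with rfl | rfl | rfl
    · left
      simp only [StrictlyBelow, e1, e2, e5, not_lt] at hnb
      have hm : c * (3 * y 1 - 4 * y 2 + y 5) ≤ c * 0 := by linarith [hnb]
      linarith [(mul_le_mul_iff_right₀ hc).mp hm]
    · right; left
      simp only [StrictlyBelow, e1, e3, e5, not_lt] at hnb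
      have hm : c * (2 * y 1 - 4 * y 3 + 2 * y 5) ≤ c * 0 := by linarith [hnb]
      linarith [(mul_le_mul_iff_right₀ hc).mp hm]
    · right; right
      simp only [StrictlyBelow, e1, e4, e5, not_lt] at hnb
      have hm : c * (y 1 - 4 * y 4 + 3 * y 5) ≤ c * 0 := by linarith [hnb]
      linarith [(mul_le_mul_iff_right₀ hc).mp hm]
  have h25 : 2 * y 2 - 3 * y 3 + y 5 ≤ 0 ∨ y 2 - 3 * y 4 + 2 * y 5 ≤ 0 := by
    rw [Sees] at ns25; push_neg at ns25
    obtain ⟨-, j, hj1, hj2, hnb⟩ := ns25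
    have hv1 : 2 < (j : ℕ) := hj1
    have hv2 : (j : ℕ) < 5 := hj2
    have hjv : j = 3 ∨ j = 4 := by
      rcases Nat.lt_or_ge (j : ℕ) 4 with hl | hl
      · exact Or.inl (Fin.ext (by exact (by omega : (j : ℕ) = 3)))
      · exact Or.inr (Fin.ext (by exact (by omega : (j : ℕ) = 4)))
    rcases hjv with rfl | rfl
    · left
      simp only [StrictlyBelow, e2, e3, e5, not_lt] at hnb
      have hm : c * (2 * y 2 - 3 * y 3 + y 5) ≤ c * 0 := by linarith [hnb]
      linarith [(mul_le_mul_iff_right₀ hc).mp hm]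
    · right
      simp only [StrictlyBelow, e2, e4, e5, not_lt] at hnb
      have hm : c * (y 2 - 3 * y 4 + 2 * y 5) ≤ c * 0 := by linarith [hnb]
      linarith [(mul_le_mul_iff_right₀ hc).mp hm]
  rcases h14 with a | a <;> rcases h15 with b | b | b <;> rcases h25 with d | d <;>
    linarith [b014, b015, b146, b236, b246, a012, a456, a, b, d]
end
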